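/- arXiv:2303.01552 — 6 statements merged into one kernel-verified Lean document; each statement's English description precedes it below -/
import Mathlib

section
/- Fix an index i belonging to the set of true null hypotheses. Suppose that (a) the CDF of the test statistic T_i satisfies F_i(t) ≤ F_j(t) for every negative control index j and all real t, and (b) the collection of probability-integral transforms (F_j(T_j)) indexed by {i} together with all negative control indices is exchangeable. Assume all test statistics have continuous CDFs so there are no ties almost surely. Then the RANC p-value p_i is valid: P(p_i ≤ α) ≤ α for all 0 < α < 1. -/
open MeasureTheory ProbabilityTheory

/-- The (right-continuous) CDF of a real random variable `X` under `μ`. -/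
noncomputable def cdf' {Ω : Type*} [MeasurableSpace Ω] (μ : Measure Ω) (X : Ω → ℝ) (t : ℝ) : ℝ :=
  (μ {ω | X ω ≤ t}).toReal

/-- The random variable `X` has a continuous CDF under `μ`. -/
def ContinuousCDF {Ω : Type*} [MeasurableSpace Ω] (μ : Measure Ω) (X : Ω → ℝ) : Prop :=
  Continuous (cdf' μ X)

/-- A collection of real random variables is exchangeable: its joint law is invariant
under every permutation of the index set. -/
def Exchangeable {Ω : Type*} [MeasurableSpace Ω] {ι : Type*} (μ : Measure Ω)
    (X : ι → Ω → ℝ) : Prop :=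
  ∀ e : Equiv.Perm ι,
    Measure.map (fun ω => fun i => X (e i) ω) μ = Measure.map (fun ω => fun i => X i ω) μ

/-- The RANC p-value of investigated hypothesis `i` (statistics `T (Fin.castAdd m i)`,
negative controls `T (Fin.natAdd n j)`):
`p_i = (1 + #{negative controls j : T_j ≤ T_i}) / (1 + m)`. -/
noncomputable def ranc {Ω : Type*} (n m : ℕ) (T : Fin (n + m) → Ω → ℝ) (i : Fin n)
    (ω : Ω) : ℝ :=
  ((1 : ℝ) +
      ({j : Fin m | T (Fin.natAdd n j) ω ≤ T (Fin.castAdd m i) ω} : Set (Fin m)).ncard) /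
    (1 + (m : ℝ))

section Aux
open MeasureTheory Finset
open scoped ENNReal

lemma cdf'_mono {Ω : Type*} [MeasurableSpace Ω] (μ : Measure Ω) [IsProbabilityMeasure μ]
    (X : Ω → ℝ) : Monotone (cdf' μ X) := by
  intro s t hst
  apply ENNReal.toReal_mono (measure_ne_top μ _)
  exact measure_mono (fun ω hω => le_trans hω hst)

lemma meas_eq_of_cdf'_eq {Ω : Type*} [MeasurableSpace Ω] (μ : Measure Ω) [IsProbabilityMeasure μ]
    (X : Ω → ℝ) {s t : ℝ} (h : cdf' μ X s = cdf' μ X t) :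
    μ {ω | X ω ≤ s} = μ {ω | X ω ≤ t} :=
  (ENNReal.toReal_eq_toReal_iff' (measure_ne_top μ _) (measure_ne_top μ _)).mp h

lemma flat_null {Ω : Type*} [MeasurableSpace Ω] (μ : Measure Ω) [IsProbabilityMeasure μ]
    (X : Ω → ℝ) (hX : Measurable X) (hc : Continuous (cdf' μ X)) (q : ℝ) :
    μ {ω | q < X ω ∧ cdf' μ X (X ω) ≤ cdf' μ X q} = 0 := by
  set F := cdf' μ X with hF
  set S : Set ℝ := {t | F t = F q} with hS
  have hqS : q ∈ S := rfl
  have hsub : {ω | q < X ω ∧ F (X ω) ≤ F q} ⊆ {ω | q < X ω ∧ X ω ∈ S} := by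
    intro ω ⟨h1, h2⟩
    exact ⟨h1, le_antisymm h2 (cdf'_mono μ X h1.le)⟩
  have hmIic : ∀ t : ℝ, MeasurableSet {ω | X ω ≤ t} := fun t => hX measurableSet_Iic
  by_cases hbdd : BddAbove S
  · set s := sSup S with hs
    have hlub : IsLUB S s := isLUB_csSup ⟨q, hqS⟩ hbdd
    have hFs : F s = F q := by
      have hclosed : IsClosed S := isClosed_eq hc continuous_const
      exact hclosed.closure_subset (hlub.mem_closure ⟨q, hqS⟩)
    have hsub2 : {ω | q < X ω ∧ X ω ∈ S} ⊆ {ω | q < X ω ∧ X ω ≤ s} := by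
      intro ω ⟨h1, h2⟩
      exact ⟨h1, le_csSup hbdd h2⟩
    have hmeq : μ {ω | X ω ≤ s} = μ {ω | X ω ≤ q} := meas_eq_of_cdf'_eq μ X hFs
    have hunion : {ω | X ω ≤ q} ∪ {ω | q < X ω ∧ X ω ≤ s} = {ω | X ω ≤ s} := by
      ext ω
      constructor
      · rintro (h | ⟨_, h⟩)
        · exact le_trans h (le_csSup hbdd hqS)
        · exact h
      · intro h
        rcases le_or_gt (X ω) q with h' | h'
        · exact Or.inl h'
        · exact Or.inr ⟨h', h⟩
    have hmB : MeasurableSet {ω | q < X ω ∧ X ω ≤ s} := by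
      have : {ω | q < X ω ∧ X ω ≤ s} = X ⁻¹' (Set.Ioc q s) := rfl
      rw [this]; exact hX measurableSet_Ioc
    have hdisj : Disjoint {ω | X ω ≤ q} {ω | q < X ω ∧ X ω ≤ s} := by
      rw [Set.disjoint_left]
      rintro ω h1 ⟨h2, _⟩
      exact absurd h1 (not_le.mpr h2)
    have hz : μ {ω | q < X ω ∧ X ω ≤ s} = 0 := by
      have h1 : μ {ω | X ω ≤ q} + μ {ω | q < X ω ∧ X ω ≤ s} = μ {ω | X ω ≤ s} := by
        rw [← measure_union hdisj hmB, hunion]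
      rw [hmeq] at h1
      have h2 : μ {ω | X ω ≤ q} + μ {ω | q < X ω ∧ X ω ≤ s}
          ≤ μ {ω | X ω ≤ q} + 0 := by rw [add_zero, h1]
      simpa using ENNReal.le_of_add_le_add_left (measure_ne_top μ _) h2
    exact le_antisymm (le_trans (measure_mono (hsub.trans hsub2)) hz.le) (zero_le)
  · have hconst : ∀ t, q ≤ t → F t = F q := by
      intro t ht
      obtain ⟨u, huS, hu⟩ := not_bddAbove_iff.mp hbdd t
      exact le_antisymm (huS ▸ cdf'_mono μ X hu.le) (cdf'_mono μ X ht)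
    have hz : μ {ω | q < X ω} = 0 := by
      have hmono : Monotone (fun k : ℕ => {ω | X ω ≤ q + (k : ℝ)}) := by
        intro a b hab ω h
        have h' : X ω ≤ q + (a : ℝ) := h
        have : (a : ℝ) ≤ b := Nat.cast_le.mpr hab
        show X ω ≤ q + (b : ℝ)
        linarith
      have hun : ⋃ k : ℕ, {ω | X ω ≤ q + (k : ℝ)} = Set.univ := by
        ext ω; simp only [Set.mem_iUnion, Set.mem_univ, iff_true]
        obtain ⟨k, hk⟩ := exists_nat_ge (X ω - q)
        exact ⟨k, show X ω ≤ q + (k : ℝ) by linarith⟩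
      have heach : ∀ k : ℕ, μ {ω | X ω ≤ q + (k : ℝ)} = μ {ω | X ω ≤ q} := by
        intro k
        exact meas_eq_of_cdf'_eq μ X (hconst (q + k) (by simp [Nat.cast_nonneg]))
      have huniv : μ (Set.univ) = μ {ω | X ω ≤ q} := by
        rw [← hun, hmono.directed_le.measure_iUnion]
        simp [heach]
      have hcompl : {ω | q < X ω} = {ω | X ω ≤ q}ᶜ := by ext ω; simp
      rw [hcompl, measure_compl (hmIic q) (measure_ne_top μ _), ← huniv]
      simp
    have : μ {ω | q < X ω ∧ F (X ω) ≤ F q} ≤ μ {ω | q < X ω} :=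
      measure_mono (fun ω h => h.1)
    exact le_antisymm (hz ▸ this) (zero_le)


lemma count_low_rank {ι : Type*} [Fintype ι] [DecidableEq ι] (v : ι → ℝ) (x : ℝ) (hx : 0 ≤ x) :
    ((univ.filter (fun k : ι =>
      ((univ.filter (fun l => v l ≤ v k)).card : ℝ) ≤ x)).card : ℝ) ≤ x := by
  classical
  set S := univ.filter (fun k : ι => ((univ.filter (fun l => v l ≤ v k)).card : ℝ) ≤ x) with hS
  rcases S.eq_empty_or_nonempty with h | h
  · simp [h, hx]
  · obtain ⟨k, hkS, hk⟩ := S.exists_max_image v h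
    have hsub : S ⊆ univ.filter (fun l => v l ≤ v k) := by
      intro a ha
      simp only [mem_filter, mem_univ, true_and]
      exact hk a ha
    have h1 : (S.card : ℝ) ≤ ((univ.filter (fun l => v l ≤ v k)).card : ℝ) :=
      Nat.cast_le.mpr (card_le_card hsub)
    have h2 : ((univ.filter (fun l => v l ≤ v k)).card : ℝ) ≤ x := by
      have := (mem_filter.mp hkS).2
      exact this
    exact le_trans h1 h2

lemma card_filter_perm {ι : Type*} [Fintype ι] [DecidableEq ι] (e : Equiv.Perm ι)
    (p : ι → Prop) [DecidablePred p] :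
    (univ.filter fun l => p (e l)).card = (univ.filter p).card := by
  apply Finset.card_bij' (fun a _ => e a) (fun b _ => e.symm b) <;> simp

lemma exch_rank_bound {Ω : Type*} [MeasurableSpace Ω] (μ : Measure Ω) [IsProbabilityMeasure μ]
    {m : ℕ} (U : Option (Fin m) → Ω → ℝ) (hU : ∀ k, Measurable (U k))
    (hexch : Exchangeable μ U) (x : ℝ) (hx : 0 ≤ x) :
    μ {ω | ((univ.filter (fun l : Option (Fin m) => U l ω ≤ U none ω)).card : ℝ) ≤ x}
      ≤ ENNReal.ofReal (x / (m + 1)) := by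
  classical
  let ι := Option (Fin m)
  set V : Ω → (ι → ℝ) := fun ω l => U l ω with hV
  have hVmeas : Measurable V := measurable_pi_lambda _ (fun l => hU l)
  -- the rank functions on path space
  set g : ι → (ι → ℝ) → ℝ := fun k v => ((univ.filter (fun l => v l ≤ v k)).card : ℝ) with hg
  have hgmeas : ∀ k, Measurable (g k) := by
    intro k
    have : g k = fun v => ∑ l : ι, if v l ≤ v k then (1 : ℝ) else 0 := by
      funext v
      show ((univ.filter (fun l => v l ≤ v k)).card : ℝ) = _
      rw [Finset.card_filter]
      push_cast
      apply Finset.sum_congr rfl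
      intro l _
      by_cases h : v l ≤ v k <;> simp [h]
    rw [this]
    exact Finset.measurable_sum _ (fun l _ => Measurable.ite
      (measurableSet_le (measurable_pi_apply l) (measurable_pi_apply k))
      measurable_const measurable_const)
  set A : ι → Set (ι → ℝ) := fun k => {v | g k v ≤ x} with hA
  have hAmeas : ∀ k, MeasurableSet (A k) := fun k => (hgmeas k) measurableSet_Iic
  set B : ι → Set Ω := fun k => V ⁻¹' A k with hB
  have hBmeas : ∀ k, MeasurableSet (B k) := fun k => hVmeas (hAmeas k)
  -- all B k have the same measure
  have hsame : ∀ k, μ (B k) = μ (B none) := by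
    intro k
    set e : Equiv.Perm ι := Equiv.swap none k with he
    have hW : Measurable (fun ω => fun l => U (e l) ω) :=
      measurable_pi_lambda _ (fun l => hU (e l))
    have h1 : μ (B none) = Measure.map V μ (A none) := by
      rw [Measure.map_apply hVmeas (hAmeas none)]
    have h2 : Measure.map V μ (A none)
        = Measure.map (fun ω => fun l => U (e l) ω) μ (A none) := (congrFun (congrArg _ (hexch e)) _).symm
    have h3 : Measure.map (fun ω => fun l => U (e l) ω) μ (A none)
        = μ ((fun ω => fun l => U (e l) ω) ⁻¹' A none) := Measure.map_apply hW (hAmeas none)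
    have h4 : (fun ω => fun l => U (e l) ω) ⁻¹' A none = B k := by
      ext ω
      show g none (fun l => U (e l) ω) ≤ x ↔ g k (V ω) ≤ x
      have henone : e none = k := Equiv.swap_apply_left none k
      have hfun : univ.filter (fun l => U (e l) ω ≤ U (e none) ω)
          = univ.filter (fun l => U (e l) ω ≤ U k ω) := by
        apply Finset.filter_congr
        intro l _
        rw [henone]
      have hcard : g none (fun l => U (e l) ω) = g k (V ω) := by
        show ((univ.filter (fun l => U (e l) ω ≤ U (e none) ω)).card : ℝ)
          = ((univ.filter (fun l => U l ω ≤ U k ω)).card : ℝ)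
        rw [hfun]
        exact_mod_cast card_filter_perm e (fun l => U l ω ≤ U k ω)
      rw [hcard]
    rw [h1, h2, h3, h4]
  -- sum of measures bounded by x
  have hsum : ∑ k : ι, μ (B k) ≤ ENNReal.ofReal x := by
    have h1 : ∀ k : ι, μ (B k) = ∫⁻ ω, (B k).indicator 1 ω ∂μ := by
      intro k; rw [lintegral_indicator_one (hBmeas k)]
    calc ∑ k : ι, μ (B k) = ∑ k : ι, ∫⁻ ω, (B k).indicator 1 ω ∂μ := by simp_rw [h1]
      _ = ∫⁻ ω, ∑ k : ι, (B k).indicator 1 ω ∂μ := by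
          rw [lintegral_finset_sum]
          exact fun k _ => (measurable_one.indicator (hBmeas k))
      _ ≤ ∫⁻ _, ENNReal.ofReal x ∂μ := by
          apply lintegral_mono
          intro ω
          show ∑ k : ι, (B k).indicator 1 ω ≤ ENNReal.ofReal x
          have hpt : ∑ k : ι, (B k).indicator 1 ω
              = ((univ.filter fun k : ι => ω ∈ B k).card : ℝ≥0∞) := by
            rw [Finset.card_filter]
            push_cast
            apply Finset.sum_congr rfl
            intro k _
            by_cases h : ω ∈ B k <;> simp [Set.indicator_apply, h]
          rw [hpt]
          have hcount : ((univ.filter fun k : ι => ω ∈ B k).card : ℝ) ≤ x := by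
            have hset : univ.filter (fun k : ι => ω ∈ B k)
                = univ.filter (fun k : ι =>
                    ((univ.filter (fun l => V ω l ≤ V ω k)).card : ℝ) ≤ x) := by
              apply Finset.filter_congr
              intro k _
              exact Iff.rfl
            rw [hset]
            exact count_low_rank (V ω) x hx
          calc ((univ.filter fun k : ι => ω ∈ B k).card : ℝ≥0∞)
              = ENNReal.ofReal ((univ.filter fun k : ι => ω ∈ B k).card : ℝ) := by
                rw [ENNReal.ofReal_natCast]
            _ ≤ ENNReal.ofReal x := ENNReal.ofReal_le_ofReal hcount
      _ = ENNReal.ofReal x := by simp [lintegral_const]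
  -- conclude
  have hcard_ι : (Fintype.card ι : ℝ≥0∞) = (m : ℝ≥0∞) + 1 := by
    show ((Fintype.card (Option (Fin m)) : ℝ≥0∞)) = (m : ℝ≥0∞) + 1
    rw [Fintype.card_option, Fintype.card_fin]
    push_cast
    ring
  have hsum2 : ((m : ℝ≥0∞) + 1) * μ (B none) ≤ ENNReal.ofReal x := by
    calc ((m : ℝ≥0∞) + 1) * μ (B none) = ∑ _k : ι, μ (B none) := by
          rw [Finset.sum_const, Finset.card_univ, nsmul_eq_mul, hcard_ι]
      _ = ∑ k : ι, μ (B k) := by exact Finset.sum_congr rfl (fun k _ => (hsame k).symm)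
      _ ≤ ENNReal.ofReal x := hsum
  have hdiv : μ (B none) ≤ ENNReal.ofReal x / ((m : ℝ≥0∞) + 1) := by
    rw [ENNReal.le_div_iff_mul_le (Or.inl (by simp)) (Or.inl (by simp))]
    rw [mul_comm]; exact hsum2
  have hfin : ENNReal.ofReal x / ((m : ℝ≥0∞) + 1) = ENNReal.ofReal (x / (m + 1)) := by
    rw [ENNReal.ofReal_div_of_pos (by positivity)]
    congr 1
    rw [ENNReal.ofReal_add (by positivity) zero_le_one]
    simp
  rw [← hfin]
  have hBnone : B none = {ω | ((univ.filter (fun l : ι => U l ω ≤ U none ω)).card : ℝ) ≤ x} := by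
    ext ω; simp [hB, hA, hg, Set.mem_preimage, hV]
  rw [← hBnone]
  exact hdiv


lemma card_filter_option {β : Type*} [Fintype β]
    (p : Option β → Prop) [DecidablePred p] (hp : p none) :
    (univ.filter p).card = 1 + (univ.filter (fun b => p (some b))).card := by
  rw [Finset.card_filter, Fintype.sum_option, if_pos hp, Finset.card_filter]

end Aux

open Finset in
/-- if (a) the null statistic `T_i` is stochastically larger than every
negative control and (b) the probability integral transforms of `T_i` together with the
negative controls are exchangeable (all CDFs being continuous, so no ties a.s.), then the
RANC p-value `p_i` is valid: `P(p_i ≤ α) ≤ α` for all `0 < α < 1`. -/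
theorem stmt0 {Ω : Type*} [MeasurableSpace Ω] (μ : Measure Ω) [IsProbabilityMeasure μ]
    (n m : ℕ) (T : Fin (n + m) → Ω → ℝ) (hmeas : ∀ k, Measurable (T k))
    (hcont : ∀ k, ContinuousCDF μ (T k))
    (I₀ : Set (Fin n)) (i : Fin n) (hi : i ∈ I₀)
    (hdom : ∀ j : Fin m, ∀ t : ℝ,
      cdf' μ (T (Fin.castAdd m i)) t ≤ cdf' μ (T (Fin.natAdd n j)) t)
    (hexch : Exchangeable μ (fun k : Option (Fin m) => fun ω =>
      match k with
      | none => cdf' μ (T (Fin.castAdd m i)) (T (Fin.castAdd m i) ω)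
      | some j => cdf' μ (T (Fin.natAdd n j)) (T (Fin.natAdd n j) ω))) :
    ∀ α : ℝ, 0 < α → α < 1 →
      μ {ω | ranc n m T i ω ≤ α} ≤ ENNReal.ofReal α := by
  classical
  intro α hα0 hα1
  set U : Option (Fin m) → Ω → ℝ := (fun k : Option (Fin m) => fun ω =>
      match k with
      | none => cdf' μ (T (Fin.castAdd m i)) (T (Fin.castAdd m i) ω)
      | some j => cdf' μ (T (Fin.natAdd n j)) (T (Fin.natAdd n j) ω)) with hU
  have hUmeas : ∀ k, Measurable (U k) := by
    rintro (_ | j)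
    · exact (hcont (Fin.castAdd m i)).measurable.comp (hmeas _)
    · exact (hcont (Fin.natAdd n j)).measurable.comp (hmeas _)
  set x : ℝ := α * (1 + m) with hx
  have hx0 : 0 ≤ x := by positivity
  have key : μ {ω | ((Finset.univ.filter
      (fun l : Option (Fin m) => U l ω ≤ U none ω)).card : ℝ) ≤ x}
      ≤ ENNReal.ofReal (x / (m + 1)) := exch_rank_bound μ U hUmeas hexch x hx0
  -- the null set of "ties/flat regions"
  set N : Set Ω := ⋃ (j : Fin m) (q : ℚ),
      {ω | (q : ℝ) < T (Fin.natAdd n j) ω ∧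
        cdf' μ (T (Fin.natAdd n j)) (T (Fin.natAdd n j) ω)
          ≤ cdf' μ (T (Fin.natAdd n j)) (q : ℝ)} with hN
  have hNnull : μ N = 0 := by
    apply measure_iUnion_null
    intro j
    apply measure_iUnion_null
    intro q
    exact flat_null μ (T (Fin.natAdd n j)) (hmeas _) (hcont _) (q : ℝ)
  -- inclusion of events
  have hsub : {ω | ranc n m T i ω ≤ α} ⊆
      {ω | ((Finset.univ.filter
        (fun l : Option (Fin m) => U l ω ≤ U none ω)).card : ℝ) ≤ x} ∪ N := by
    intro ω hω
    by_cases hωN : ω ∈ N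
    · exact Or.inr hωN
    left
    show ((Finset.univ.filter (fun l : Option (Fin m) => U l ω ≤ U none ω)).card : ℝ) ≤ x
    -- step 1: whenever U (some j) ω ≤ U none ω, we have T_j ≤ T_i at ω
    have hstep : ∀ j : Fin m, U (some j) ω ≤ U none ω →
        T (Fin.natAdd n j) ω ≤ T (Fin.castAdd m i) ω := by
      intro j hj
      by_contra hcon
      push_neg at hcon
      obtain ⟨q, hq1, hq2⟩ := exists_rat_btwn hcon
      apply hωN
      refine Set.mem_iUnion.mpr ⟨j, Set.mem_iUnion.mpr ⟨q, ⟨hq2, ?_⟩⟩⟩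
      calc cdf' μ (T (Fin.natAdd n j)) (T (Fin.natAdd n j) ω)
          = U (some j) ω := rfl
        _ ≤ U none ω := hj
        _ = cdf' μ (T (Fin.castAdd m i)) (T (Fin.castAdd m i) ω) := rfl
        _ ≤ cdf' μ (T (Fin.natAdd n j)) (T (Fin.castAdd m i) ω) := hdom j _
        _ ≤ cdf' μ (T (Fin.natAdd n j)) (q : ℝ) :=
            cdf'_mono μ (T (Fin.natAdd n j)) hq1.le
    -- step 2: count comparison
    have hcard_opt : (Finset.univ.filter
        (fun l : Option (Fin m) => U l ω ≤ U none ω)).card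
        = 1 + (Finset.univ.filter (fun j : Fin m => U (some j) ω ≤ U none ω)).card :=
      card_filter_option _ le_rfl
    have hK'K : (Finset.univ.filter (fun j : Fin m => U (some j) ω ≤ U none ω)).card
        ≤ (Finset.univ.filter
          (fun j : Fin m => T (Fin.natAdd n j) ω ≤ T (Fin.castAdd m i) ω)).card := by
      apply Finset.card_le_card
      intro j hj
      simp only [Finset.mem_filter, Finset.mem_univ, true_and] at hj ⊢
      exact hstep j hj
    -- step 3: from ranc ≤ α
    have hranc : ((1 : ℝ) + ({j : Fin m |
        T (Fin.natAdd n j) ω ≤ T (Fin.castAdd m i) ω} : Set (Fin m)).ncard) / (1 + (m : ℝ))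
        ≤ α := hω
    have hncard : ({j : Fin m |
        T (Fin.natAdd n j) ω ≤ T (Fin.castAdd m i) ω} : Set (Fin m)).ncard
        = (Finset.univ.filter
          (fun j : Fin m => T (Fin.natAdd n j) ω ≤ T (Fin.castAdd m i) ω)).card := by
      rw [Set.ncard_eq_toFinset_card']
      congr 1
      ext j
      simp
    rw [hncard] at hranc
    have hm1 : (0 : ℝ) < 1 + m := by positivity
    rw [div_le_iff₀ hm1] at hranc
    have : ((1 + (Finset.univ.filter
        (fun j : Fin m => U (some j) ω ≤ U none ω)).card : ℕ) : ℝ) ≤ x := by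
      push_cast
      have := (Nat.cast_le (α := ℝ)).mpr hK'K
      push_cast at this
      linarith [hranc, this]
    calc ((Finset.univ.filter
        (fun l : Option (Fin m) => U l ω ≤ U none ω)).card : ℝ)
        = ((1 + (Finset.univ.filter
          (fun j : Fin m => U (some j) ω ≤ U none ω)).card : ℕ) : ℝ) := by
          rw [hcard_opt]
      _ ≤ x := this
  -- conclude
  calc μ {ω | ranc n m T i ω ≤ α}
      ≤ μ ({ω | ((Finset.univ.filter
          (fun l : Option (Fin m) => U l ω ≤ U none ω)).card : ℝ) ≤ x} ∪ N) :=
        measure_mono hsub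
    _ ≤ μ {ω | ((Finset.univ.filter
          (fun l : Option (Fin m) => U l ω ≤ U none ω)).card : ℝ) ≤ x} + μ N :=
        measure_union_le _ _
    _ = μ {ω | ((Finset.univ.filter
          (fun l : Option (Fin m) => U l ω ≤ U none ω)).card : ℝ) ≤ x} := by
        rw [hNnull, add_zero]
    _ ≤ ENNReal.ofReal (x / (m + 1)) := key
    _ = ENNReal.ofReal α := by
        have hxx : x / ((m : ℝ) + 1) = α := by
          rw [hx, div_eq_iff (by positivity : ((m : ℝ) + 1) ≠ 0)]
          ring
        rw [hxx]
end

section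
/- Assume all test statistics (investigated and negative controls) are mutually independent and each true-null statistic has the same distribution, with continuous CDF, as each negative control statistic. Then for every fixed t, the estimator FDRhat(t) = n·((V_nc(t)+2)/(m+1)) / (R(t) ∨ 1) satisfies E[FDRhat(t)] ≥ FDR(t) = E[V(t)/(R(t) ∨ 1)]. -/
open MeasureTheory ProbabilityTheory
open scoped ENNReal

lemma stmt7_joint_eq_pi {Ω : Type*} [MeasurableSpace Ω] (μ : Measure Ω) [IsProbabilityMeasure μ]
    {N : ℕ} (T : Fin N → Ω → ℝ) (hmeas : ∀ k, Measurable (T k))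
    (hindep : iIndepFun T μ) :
    Measure.map (fun ω k => T k ω) μ = Measure.pi (fun k => Measure.map (T k) μ) := by
  haveI : ∀ k, IsProbabilityMeasure (Measure.map (T k) μ) :=
    fun k => Measure.isProbabilityMeasure_map (hmeas k).aemeasurable
  have hW : Measurable (fun ω k => T k ω) := measurable_pi_lambda _ hmeas
  have key : ∀ s : Fin N → Set ℝ, (∀ k, MeasurableSet (s k)) →
      Measure.map (fun ω k => T k ω) μ (Set.pi Set.univ s)
        = ∏ k, Measure.map (T k) μ (s k) := by
    intro s hs
    rw [Measure.map_apply hW (MeasurableSet.univ_pi hs)]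
    have hpre : (fun ω k => T k ω) ⁻¹' Set.pi Set.univ s = ⋂ k ∈ Finset.univ, T k ⁻¹' s k := by
      ext ω; simp [Set.mem_pi]
    rw [hpre, hindep.measure_inter_preimage_eq_mul Finset.univ (fun i _ => hs i)]
    exact Finset.prod_congr rfl fun k _ => (Measure.map_apply (hmeas k) (hs k)).symm
  exact (Measure.pi_eq key).symm

lemma stmt7_pi_swap {N : ℕ} (μs : Fin N → Measure ℝ) [∀ k, IsProbabilityMeasure (μs k)]
    (e : Equiv.Perm (Fin N)) (he : ∀ k, μs (e k) = μs k) :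
    Measure.map (fun x : Fin N → ℝ => x ∘ e) (Measure.pi μs) = Measure.pi μs := by
  have hm : Measurable (fun x : Fin N → ℝ => x ∘ e) :=
    measurable_pi_lambda _ fun k => measurable_pi_apply _
  have key : ∀ s : Fin N → Set ℝ, (∀ k, MeasurableSet (s k)) →
      Measure.map (fun x : Fin N → ℝ => x ∘ e) (Measure.pi μs) (Set.pi Set.univ s)
        = ∏ k, μs k (s k) := ?_
  · exact (Measure.pi_eq key).symm
  intro s hs
  rw [Measure.map_apply hm (MeasurableSet.univ_pi hs)]
  have hpre : (fun x : Fin N → ℝ => x ∘ e) ⁻¹' Set.pi Set.univ s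
      = Set.pi Set.univ (fun k => s (e.symm k)) := by
    ext x
    simp only [Set.mem_preimage, Set.mem_pi, Set.mem_univ, forall_true_left, Function.comp]
    exact ⟨fun h k => by simpa using h (e.symm k), fun h k => by simpa using h (e k)⟩
  rw [hpre, Measure.pi_pi]
  calc ∏ k, μs k (s (e.symm k)) = ∏ k, μs (e k) (s (e.symm (e k))) := (Equiv.prod_comp e _).symm
    _ = ∏ k, μs k (s k) := by simp [he]

lemma stmt7_ncard_cast {α : Type*} [Fintype α] (p : α → Prop) [DecidablePred p] :
    ((({x | p x} : Set α).ncard : ℝ)) = ∑ x, if p x then (1:ℝ) else 0 := by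
  rw [Set.ncard_eq_toFinset_card', Set.toFinset_setOf, Finset.card_filter]
  push_cast
  rfl

noncomputable def s7ind (t c : ℝ) : ℝ := if c ≤ t then 1 else 0
noncomputable def s7R (n m : ℕ) (t : ℝ) (x : Fin (n+m) → ℝ) : ℝ :=
  ∑ i : Fin n, s7ind t (x (Fin.castAdd m i))
noncomputable def s7D (n m : ℕ) (t : ℝ) (x : Fin (n+m) → ℝ) : ℝ := max (s7R n m t x) 1
noncomputable def s7N (n m : ℕ) (t : ℝ) (x : Fin (n+m) → ℝ) : ℝ :=
  ∑ j : Fin m, s7ind t (x (Fin.natAdd n j))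
noncomputable def s7G (n m : ℕ) (t : ℝ) (x : Fin (n+m) → ℝ) : ℝ :=
  (s7N n m t x + 2) / s7D n m t x
noncomputable def s7F (n m : ℕ) (t : ℝ) (a : Fin (n+m)) (x : Fin (n+m) → ℝ) : ℝ :=
  s7ind t (x a) / s7D n m t x

lemma s7ind_nonneg (t c : ℝ) : 0 ≤ s7ind t c := by unfold s7ind; split <;> norm_num
lemma s7ind_le_one (t c : ℝ) : s7ind t c ≤ 1 := by unfold s7ind; split <;> norm_num
lemma s7ind_meas (t : ℝ) : Measurable (s7ind t) :=
  Measurable.ite measurableSet_Iic measurable_const measurable_const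

lemma s7R_meas (n m : ℕ) (t : ℝ) : Measurable (s7R n m t) :=
  Finset.measurable_sum _ fun i _ => (s7ind_meas t).comp (measurable_pi_apply _)
lemma s7N_meas (n m : ℕ) (t : ℝ) : Measurable (s7N n m t) :=
  Finset.measurable_sum _ fun j _ => (s7ind_meas t).comp (measurable_pi_apply _)
lemma s7D_meas (n m : ℕ) (t : ℝ) : Measurable (s7D n m t) :=
  (s7R_meas n m t).max measurable_const
lemma s7D_one_le (n m : ℕ) (t : ℝ) (x : Fin (n+m) → ℝ) : 1 ≤ s7D n m t x := le_max_right _ _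
lemma s7D_pos (n m : ℕ) (t : ℝ) (x : Fin (n+m) → ℝ) : 0 < s7D n m t x :=
  lt_of_lt_of_le one_pos (s7D_one_le n m t x)
lemma s7N_nonneg (n m : ℕ) (t : ℝ) (x : Fin (n+m) → ℝ) : 0 ≤ s7N n m t x :=
  Finset.sum_nonneg fun j _ => s7ind_nonneg t _
lemma s7N_le (n m : ℕ) (t : ℝ) (x : Fin (n+m) → ℝ) : s7N n m t x ≤ m := by
  calc s7N n m t x ≤ ∑ _j : Fin m, (1:ℝ) := Finset.sum_le_sum fun j _ => s7ind_le_one t _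
    _ = m := by simp
lemma s7G_meas (n m : ℕ) (t : ℝ) : Measurable (s7G n m t) :=
  ((s7N_meas n m t).add measurable_const).div (s7D_meas n m t)
lemma s7G_nonneg (n m : ℕ) (t : ℝ) (x : Fin (n+m) → ℝ) : 0 ≤ s7G n m t x :=
  div_nonneg (by linarith [s7N_nonneg n m t x]) (s7D_pos n m t x).le
lemma s7G_bound (n m : ℕ) (t : ℝ) (x : Fin (n+m) → ℝ) : ‖s7G n m t x‖ ≤ m + 2 := by
  rw [Real.norm_eq_abs, abs_of_nonneg (s7G_nonneg n m t x)]
  calc s7G n m t x ≤ (s7N n m t x + 2) / 1 :=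
        div_le_div_of_nonneg_left (by linarith [s7N_nonneg n m t x]) one_pos (s7D_one_le n m t x)
    _ ≤ m + 2 := by rw [div_one]; linarith [s7N_le n m t x]
lemma s7F_meas (n m : ℕ) (t : ℝ) (a : Fin (n+m)) : Measurable (s7F n m t a) :=
  ((s7ind_meas t).comp (measurable_pi_apply a)).div (s7D_meas n m t)
lemma s7F_nonneg (n m : ℕ) (t : ℝ) (a : Fin (n+m)) (x : Fin (n+m) → ℝ) : 0 ≤ s7F n m t a x :=
  div_nonneg (s7ind_nonneg t _) (s7D_pos n m t x).le
lemma s7F_bound (n m : ℕ) (t : ℝ) (a : Fin (n+m)) (x : Fin (n+m) → ℝ) : ‖s7F n m t a x‖ ≤ 1 := by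
  rw [Real.norm_eq_abs, abs_of_nonneg (s7F_nonneg n m t a x)]
  calc s7F n m t a x ≤ s7ind t (x a) / 1 :=
        div_le_div_of_nonneg_left (s7ind_nonneg t _) one_pos (s7D_one_le n m t x)
    _ ≤ 1 := by rw [div_one]; exact s7ind_le_one t _

lemma s7_pointwise (n m : ℕ) (t : ℝ) (i : Fin n) (x : Fin (n+m) → ℝ) :
    s7F n m t (Fin.castAdd m i) x +
      ∑ j : Fin m, s7F n m t (Fin.castAdd m i)
        (x ∘ Equiv.swap (Fin.castAdd m i) (Fin.natAdd n j)) ≤ s7G n m t x := by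
  classical
  set a := Fin.castAdd m i with ha
  set r : ℝ := ∑ i' ∈ Finset.univ.erase i, s7ind t (x (Fin.castAdd m i')) with hr
  have hr0 : 0 ≤ r := Finset.sum_nonneg fun i' _ => s7ind_nonneg t _
  have hsplit : s7R n m t x = s7ind t (x a) + r := by
    rw [s7R, ← Finset.add_sum_erase _ _ (Finset.mem_univ i)]
  have hswapR : ∀ j : Fin m,
      s7R n m t (x ∘ Equiv.swap a (Fin.natAdd n j)) = s7ind t (x (Fin.natAdd n j)) + r := by
    intro j
    rw [s7R, ← Finset.add_sum_erase _ _ (Finset.mem_univ i)]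
    congr 1
    · simp [Function.comp, ← ha, Equiv.swap_apply_left]
    · refine Finset.sum_congr rfl fun i' hi' => ?_
      have hne : i' ≠ i := (Finset.mem_erase.1 hi').1
      have h1 : Fin.castAdd m i' ≠ a := by
        rw [ha]; simpa [Fin.castAdd_inj] using hne
      have h2 : Fin.castAdd m i' ≠ Fin.natAdd n j := by
        intro h
        have := congrArg Fin.val h
        simp only [Fin.coe_castAdd, Fin.coe_natAdd] at this
        omega
      simp [Function.comp, Equiv.swap_apply_of_ne_of_ne h1 h2]
  have hdiv : ∀ c : ℝ, s7ind t c / max (s7ind t c + r) 1 = s7ind t c / (r + 1) := by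
    intro c
    by_cases h : c ≤ t
    · simp only [s7ind, if_pos h]
      rw [max_eq_left (by linarith), add_comm]
    · simp [s7ind, if_neg h]
  have hFx : s7F n m t a x = s7ind t (x a) / (r + 1) := by
    rw [s7F, s7D, hsplit, hdiv]
  have hFswap : ∀ j : Fin m,
      s7F n m t a (x ∘ Equiv.swap a (Fin.natAdd n j))
        = s7ind t (x (Fin.natAdd n j)) / (r + 1) := by
    intro j
    rw [s7F, s7D, hswapR j]
    have hxa : (x ∘ Equiv.swap a (Fin.natAdd n j)) a = x (Fin.natAdd n j) := by
      simp [Function.comp, Equiv.swap_apply_left]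
    rw [hxa, hdiv]
  have hr1 : (0:ℝ) < r + 1 := by linarith
  have hsum : s7F n m t a x + ∑ j : Fin m, s7F n m t a (x ∘ Equiv.swap a (Fin.natAdd n j))
      = (s7ind t (x a) + s7N n m t x) / (r + 1) := by
    rw [hFx, Finset.sum_congr rfl fun j _ => hFswap j, s7N, add_div, Finset.sum_div]
  rw [hsum]
  have hDle : s7D n m t x ≤ r + 1 := by
    rw [s7D, hsplit]
    exact max_le (by linarith [s7ind_le_one t (x a)]) (by linarith)
  calc (s7ind t (x a) + s7N n m t x) / (r + 1) ≤ (s7N n m t x + 2) / (r + 1) :=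
        (div_le_div_iff_of_pos_right hr1).mpr (by linarith [s7ind_le_one t (x a)])
    _ ≤ (s7N n m t x + 2) / s7D n m t x :=
        div_le_div_of_nonneg_left (by linarith [s7N_nonneg n m t x]) (s7D_pos n m t x) hDle
  -- conclusion is s7G by definition


/-- `V(t)`: number of true-null investigated statistics at most `t`. -/
noncomputable def Vcount {Ω : Type*} (n m : ℕ) (T : Fin (n + m) → Ω → ℝ)
    (I₀ : Set (Fin n)) (ω : Ω) (t : ℝ) : ℕ :=
  ({i : Fin n | i ∈ I₀ ∧ T (Fin.castAdd m i) ω ≤ t} : Set (Fin n)).ncard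

/-- `R(t)`: number of investigated statistics at most `t`. -/
noncomputable def Rcount {Ω : Type*} (n m : ℕ) (T : Fin (n + m) → Ω → ℝ)
    (ω : Ω) (t : ℝ) : ℕ :=
  ({i : Fin n | T (Fin.castAdd m i) ω ≤ t} : Set (Fin n)).ncard

/-- `V_nc(t)`: number of negative control statistics at most `t`. -/
noncomputable def VncCount {Ω : Type*} (n m : ℕ) (T : Fin (n + m) → Ω → ℝ)
    (ω : Ω) (t : ℝ) : ℕ :=
  ({j : Fin m | T (Fin.natAdd n j) ω ≤ t} : Set (Fin m)).ncard

/-- if all statistics are mutually independent and every true-null statistic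
has the same (continuous) distribution as every negative control, then for every fixed
threshold `t` the estimator `FDRhat(t) = n((V_nc(t)+2)/(m+1))/(R(t) ∨ 1)` satisfies
`E[FDRhat(t)] ≥ FDR(t) = E[V(t)/(R(t) ∨ 1)]`. -/
theorem stmt7 {Ω : Type*} [MeasurableSpace Ω] (μ : Measure Ω) [IsProbabilityMeasure μ]
    (n m : ℕ) (T : Fin (n + m) → Ω → ℝ) (hmeas : ∀ k, Measurable (T k))
    (I₀ : Set (Fin n))
    (hindep : iIndepFun T μ)
    (hident : ∀ i ∈ I₀, ∀ j : Fin m,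
      Measure.map (T (Fin.castAdd m i)) μ = Measure.map (T (Fin.natAdd n j)) μ)
    (hcont : ∀ i ∈ I₀, ContinuousCDF μ (T (Fin.castAdd m i)))
    (hcontnc : ∀ j : Fin m, ContinuousCDF μ (T (Fin.natAdd n j)))
    (t : ℝ) :
    (∫ ω, ((Vcount n m T I₀ ω t : ℝ) / (max (Rcount n m T ω t) 1 : ℕ)) ∂μ) ≤
      ∫ ω, ((n : ℝ) * (((VncCount n m T ω t : ℝ) + 2) / ((m : ℝ) + 1)) /
        (max (Rcount n m T ω t) 1 : ℕ)) ∂μ := by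
    classical
  have hW : Measurable (fun ω (k : Fin (n+m)) => T k ω) := measurable_pi_lambda _ hmeas
  set W : Ω → (Fin (n+m) → ℝ) := fun ω k => T k ω with hWdef
  haveI hpm : ∀ k, IsProbabilityMeasure (Measure.map (T k) μ) :=
    fun k => Measure.isProbabilityMeasure_map (hmeas k).aemeasurable
  set π : Measure (Fin (n+m) → ℝ) := Measure.pi (fun k => Measure.map (T k) μ) with hπdef
  haveI : IsProbabilityMeasure π := by rw [hπdef]; infer_instance
  have hν : Measure.map W μ = π := stmt7_joint_eq_pi μ T hmeas hindep
  have transfer : ∀ f : (Fin (n+m) → ℝ) → ℝ, Measurable f →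
      ∫ x, f x ∂π = ∫ ω, f (W ω) ∂μ := by
    intro f hf
    rw [← hν, integral_map hW.aemeasurable hf.aestronglyMeasurable]
  have integπ : ∀ (f : (Fin (n+m) → ℝ) → ℝ) (C : ℝ), Measurable f → (∀ x, ‖f x‖ ≤ C) →
      Integrable f π := fun f C hf hC =>
    (integrable_const C).mono' hf.aestronglyMeasurable (Filter.Eventually.of_forall hC)
  have integμ : ∀ (f : (Fin (n+m) → ℝ) → ℝ) (C : ℝ), Measurable f → (∀ x, ‖f x‖ ≤ C) →
      Integrable (fun ω => f (W ω)) μ := fun f C hf hC =>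
    (integrable_const C).mono' ((hf.comp hW).aestronglyMeasurable)
      (Filter.Eventually.of_forall fun ω => hC _)
  -- cast identities
  have hcastD : ∀ ω, ((max (Rcount n m T ω t) 1 : ℕ) : ℝ) = s7D n m t (W ω) := by
    intro ω
    rw [Nat.cast_max, Nat.cast_one, s7D]
    congr 1
    rw [Rcount, stmt7_ncard_cast]
    rfl
  have hcastV : ∀ ω, (Vcount n m T I₀ ω t : ℝ)
      = ∑ i : Fin n, (if i ∈ I₀ then s7ind t (W ω (Fin.castAdd m i)) else 0) := by
    intro ω
    rw [Vcount, stmt7_ncard_cast]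
    refine Finset.sum_congr rfl fun i _ => ?_
    by_cases hi : i ∈ I₀ <;> simp [hi, s7ind, hWdef]
  have hcastN : ∀ ω, (VncCount n m T ω t : ℝ) = s7N n m t (W ω) := by
    intro ω
    rw [VncCount, stmt7_ncard_cast]
    rfl
  -- swap invariance of integrals of F
  have hswapint : ∀ i : Fin n, i ∈ I₀ → ∀ j : Fin m,
      ∫ x, s7F n m t (Fin.castAdd m i)
          (x ∘ Equiv.swap (Fin.castAdd m i) (Fin.natAdd n j)) ∂π
        = ∫ x, s7F n m t (Fin.castAdd m i) x ∂π := by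
    intro i hi j
    have he : ∀ k, (fun k => Measure.map (T k) μ)
        ((Equiv.swap (Fin.castAdd m i) (Fin.natAdd n j)) k) = Measure.map (T k) μ := by
      intro k
      rcases eq_or_ne k (Fin.castAdd m i) with rfl | h1
      · rw [Equiv.swap_apply_left]; exact (hident i hi j).symm
      rcases eq_or_ne k (Fin.natAdd n j) with rfl | h2
      · rw [Equiv.swap_apply_right]; exact hident i hi j
      · rw [Equiv.swap_apply_of_ne_of_ne h1 h2]
    have hmapinv : Measure.map
        (fun x : Fin (n+m) → ℝ => x ∘ Equiv.swap (Fin.castAdd m i) (Fin.natAdd n j)) π = π := by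
      rw [hπdef]
      exact stmt7_pi_swap _ _ he
    have hcm : Measurable
        (fun x : Fin (n+m) → ℝ => x ∘ Equiv.swap (Fin.castAdd m i) (Fin.natAdd n j)) :=
      measurable_pi_lambda _ fun k => measurable_pi_apply _
    calc ∫ x, s7F n m t (Fin.castAdd m i)
            (x ∘ Equiv.swap (Fin.castAdd m i) (Fin.natAdd n j)) ∂π
        = ∫ y, s7F n m t (Fin.castAdd m i) y
            ∂(Measure.map (fun x : Fin (n+m) → ℝ =>
              x ∘ Equiv.swap (Fin.castAdd m i) (Fin.natAdd n j)) π) :=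
          (integral_map hcm.aemeasurable (s7F_meas n m t _).aestronglyMeasurable).symm
      _ = ∫ x, s7F n m t (Fin.castAdd m i) x ∂π := by rw [hmapinv]
  -- integrability facts
  have hGint : Integrable (s7G n m t) π :=
    integπ _ (m + 2) (s7G_meas n m t) (s7G_bound n m t)
  have hGpos : 0 ≤ ∫ x, s7G n m t x ∂π := integral_nonneg (s7G_nonneg n m t)
  have hm1 : (0:ℝ) < (m:ℝ) + 1 := by positivity
  -- per-i bound
  have hperi : ∀ i : Fin n, i ∈ I₀ →
      ∫ x, s7F n m t (Fin.castAdd m i) x ∂π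
        ≤ (1/((m:ℝ)+1)) * ∫ x, s7G n m t x ∂π := by
    intro i hi
    have hFint : Integrable (s7F n m t (Fin.castAdd m i)) π :=
      integπ _ 1 (s7F_meas n m t _) (s7F_bound n m t _)
    have hFjint : ∀ j : Fin m, Integrable (fun x => s7F n m t (Fin.castAdd m i)
        (x ∘ Equiv.swap (Fin.castAdd m i) (Fin.natAdd n j))) π := by
      intro j
      refine integπ _ 1 ?_ (fun x => s7F_bound n m t _ _)
      exact (s7F_meas n m t _).comp (measurable_pi_lambda _ fun k => measurable_pi_apply _)
    have hsum : ((m:ℝ)+1) * ∫ x, s7F n m t (Fin.castAdd m i) x ∂π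
        = ∫ x, (s7F n m t (Fin.castAdd m i) x + ∑ j : Fin m,
            s7F n m t (Fin.castAdd m i)
              (x ∘ Equiv.swap (Fin.castAdd m i) (Fin.natAdd n j))) ∂π := by
      rw [integral_add hFint (integrable_finset_sum _ fun j _ => hFjint j),
        integral_finset_sum _ fun j _ => hFjint j,
        Finset.sum_congr rfl fun j _ => hswapint i hi j]
      simp only [Finset.sum_const, Finset.card_univ, Fintype.card_fin, nsmul_eq_mul]
      ring
    have hle : ∫ x, (s7F n m t (Fin.castAdd m i) x + ∑ j : Fin m,
        s7F n m t (Fin.castAdd m i)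
          (x ∘ Equiv.swap (Fin.castAdd m i) (Fin.natAdd n j))) ∂π
        ≤ ∫ x, s7G n m t x ∂π := by
      refine integral_mono (hFint.add (integrable_finset_sum _ fun j _ => hFjint j)) hGint ?_
      exact fun x => s7_pointwise n m t i x
    calc ∫ x, s7F n m t (Fin.castAdd m i) x ∂π
        = (1/((m:ℝ)+1)) * (((m:ℝ)+1) * ∫ x, s7F n m t (Fin.castAdd m i) x ∂π) := by
          field_simp
      _ ≤ (1/((m:ℝ)+1)) * ∫ x, s7G n m t x ∂π := by
          refine mul_le_mul_of_nonneg_left ?_ (by positivity)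
          rw [hsum]; exact hle
  -- rewrite LHS
  have hLHS : (∫ ω, ((Vcount n m T I₀ ω t : ℝ) / (max (Rcount n m T ω t) 1 : ℕ)) ∂μ)
      = ∑ i : Fin n, ∫ ω, (if i ∈ I₀ then s7F n m t (Fin.castAdd m i) (W ω) else 0) ∂μ := by
    rw [← integral_finset_sum]
    · refine integral_congr_ae (Filter.Eventually.of_forall fun ω => ?_)
      dsimp only
      rw [hcastV ω, hcastD ω, Finset.sum_div]
      refine Finset.sum_congr rfl fun i _ => ?_
      by_cases hi : i ∈ I₀
      · simp [hi, s7F]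
      · simp [hi]
    · intro i _
      by_cases hi : i ∈ I₀
      · simp only [hi, if_true]
        exact integμ _ 1 (s7F_meas n m t _) (s7F_bound n m t _)
      · simp only [hi, if_false]
        exact integrable_const 0
  -- rewrite RHS
  have hRHS : (∫ ω, ((n : ℝ) * (((VncCount n m T ω t : ℝ) + 2) / ((m : ℝ) + 1)) /
        (max (Rcount n m T ω t) 1 : ℕ)) ∂μ)
      = ((n:ℝ)/((m:ℝ)+1)) * ∫ x, s7G n m t x ∂π := by
    rw [transfer _ (s7G_meas n m t), ← integral_const_mul]
    refine integral_congr_ae (Filter.Eventually.of_forall fun ω => ?_)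
    dsimp only
    rw [hcastN ω, hcastD ω, s7G]
    ring
  rw [hLHS, hRHS]
  have hterm : ∀ i : Fin n,
      ∫ ω, (if i ∈ I₀ then s7F n m t (Fin.castAdd m i) (W ω) else 0) ∂μ
        ≤ (1/((m:ℝ)+1)) * ∫ x, s7G n m t x ∂π := by
    intro i
    by_cases hi : i ∈ I₀
    · simp only [hi, if_true]
      rw [← transfer _ (s7F_meas n m t _)]
      exact hperi i hi
    · simp only [hi, if_false, integral_const, smul_zero]
      positivity
  calc ∑ i : Fin n, ∫ ω, (if i ∈ I₀ then s7F n m t (Fin.castAdd m i) (W ω) else 0) ∂μ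
      ≤ ∑ _i : Fin n, (1/((m:ℝ)+1)) * ∫ x, s7G n m t x ∂π :=
        Finset.sum_le_sum fun i _ => hterm i
    _ = ((n:ℝ)/((m:ℝ)+1)) * ∫ x, s7G n m t x ∂π := by
        simp only [Finset.sum_const, Finset.card_univ, Fintype.card_fin, nsmul_eq_mul]
        ring
end

section
/- Assume every true-null statistic is uniformly stochastically larger than every negative control statistic and all statistics are mutually independent with continuous CDFs and values in (0,1). Let F_t = σ(V(s), S(s), V_nc(s) : t ≤ s ≤ 1) be the backward filtration and define M(t) = V(t)·(1+m)/(1+V_nc(t)). Then M is a backward super-martingale: for all 0 ≤ s ≤ t ≤ 1 there exists 0 ≤ p_t^s ≤ 1 (any number with max over true nulls i of F_i(s)/F_i(t) ≤ p_t^s ≤ min over negative controls j of F_j(s)/F_j(t)) such that E[M(s) | F_t] ≤ M(t)·(1 − (1 − p_t^s)^{V_nc(t)+1}) ≤ M(t). -/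
open MeasureTheory ProbabilityTheory
open scoped ENNReal

/-- `X` is uniformly stochastically larger than `Y` (both `[0,1]`-valued):
`P(X ≤ t) > 0`, `P(Y ≤ t) > 0`, and `P(X ≤ s | X ≤ t) ≤ P(Y ≤ s | Y ≤ t)` for all
`0 < s ≤ t ≤ 1`. -/
def UnifStochLarger {Ω : Type*} [MeasurableSpace Ω] (μ : Measure Ω)
    (X Y : Ω → ℝ) : Prop :=
  ∀ s t : ℝ, 0 < s → s ≤ t → t ≤ 1 →
    0 < μ {ω | X ω ≤ t} ∧ 0 < μ {ω | Y ω ≤ t} ∧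
      μ {ω | X ω ≤ s} / μ {ω | X ω ≤ t} ≤ μ {ω | Y ω ≤ s} / μ {ω | Y ω ≤ t}

/-- `S(t)`: number of non-null investigated statistics at most `t`. -/
noncomputable def Scount {Ω : Type*} (n m : ℕ) (T : Fin (n + m) → Ω → ℝ)
    (I₀ : Set (Fin n)) (ω : Ω) (t : ℝ) : ℕ :=
  ({i : Fin n | i ∉ I₀ ∧ T (Fin.castAdd m i) ω ≤ t} : Set (Fin n)).ncard

/-- The backward filtration `F_t = σ(V(s), S(s), V_nc(s) : t ≤ s ≤ 1)`. -/
noncomputable def backFiltration {Ω : Type*} (n m : ℕ) (T : Fin (n + m) → Ω → ℝ)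
    (I₀ : Set (Fin n)) (t : ℝ) : MeasurableSpace Ω :=
  ⨆ s ∈ Set.Icc t (1 : ℝ),
    MeasurableSpace.comap
      (fun ω => (Vcount n m T I₀ ω s, Scount n m T I₀ ω s, VncCount n m T ω s))
      (⊤ : MeasurableSpace (ℕ × ℕ × ℕ))

/-- The process `M(t) = V(t)·(1+m)/(1+V_nc(t))`. -/
noncomputable def Mproc {Ω : Type*} (n m : ℕ) (T : Fin (n + m) → Ω → ℝ)
    (I₀ : Set (Fin n)) (t : ℝ) (ω : Ω) : ℝ :=
  (Vcount n m T I₀ ω t : ℝ) * (1 + (m : ℝ)) / (1 + (VncCount n m T ω t : ℝ))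


open Finset
open scoped Classical

section AuxCore

variable {κ : Type*} [DecidableEq κ]



variable {κ : Type*} [DecidableEq κ]

lemma intAux (p : ℝ) (c : ℕ) :
    ∫ u in (0:ℝ)..1, p * (1 - p + p * u) ^ c = (1 - (1 - p) ^ (c + 1)) / (c + 1) := by
  have hders : ∀ u ∈ Set.uIcc (0:ℝ) 1, HasDerivAt (fun v => (1 - p + p * v) ^ (c + 1) / (c + 1))
      (p * (1 - p + p * u) ^ c) u := by
    intro u _
    have h1 : HasDerivAt (fun v : ℝ => 1 - p + p * v) p u := by
      simpa using ((hasDerivAt_id u).const_mul p).const_add (1 - p)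
    have h2 := (h1.pow (c + 1)).div_const ((c : ℝ) + 1)
    refine h2.congr_deriv ?_
    have : ((c : ℝ) + 1) ≠ 0 := by positivity
    rw [div_eq_iff this, add_tsub_cancel_right]
    push_cast
    ring
  have hcont : IntervalIntegrable (fun u => p * (1 - p + p * u) ^ c) volume 0 1 :=
    (Continuous.intervalIntegrable (by continuity) _ _)
  rw [intervalIntegral.integral_eq_sub_of_hasDerivAt hders hcont]
  have : (1 : ℝ) - p + p * 1 = 1 := by ring
  rw [this]
  have : (1 : ℝ) - p + p * 0 = 1 - p := by ring
  rw [this]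
  ring

lemma gammaInt (X Cf : Finset κ) (q w : κ → ℝ) :
    ∑ E ∈ X.powerset, (1 / (1 + ((E ∩ Cf).card : ℝ))) * ((∏ k ∈ E, q k) * ∏ k ∈ X \ E, (w k - q k))
      = ∫ u in (0:ℝ)..1, ∏ k ∈ X, ((if k ∈ Cf then u * q k else q k) + (w k - q k)) := by
  have hpt : ∀ u : ℝ, ∏ k ∈ X, ((if k ∈ Cf then u * q k else q k) + (w k - q k))
      = ∑ E ∈ X.powerset, u ^ ((E ∩ Cf).card) * ((∏ k ∈ E, q k) * ∏ k ∈ X \ E, (w k - q k)) := by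
    intro u
    rw [Finset.prod_add]
    refine Finset.sum_congr rfl fun E _ => ?_
    have : (∏ k ∈ E, (if k ∈ Cf then u * q k else q k))
        = u ^ ((E ∩ Cf).card) * ∏ k ∈ E, q k := by
      rw [Finset.prod_ite, Finset.prod_mul_distrib, Finset.prod_const, Finset.filter_mem_eq_inter]
      rw [mul_assoc]
      congr 1
      rw [← Finset.filter_mem_eq_inter, Finset.prod_filter_mul_prod_filter_not]
    rw [this, mul_assoc]
  have hint : ∀ E : Finset κ, IntervalIntegrable
      (fun u : ℝ => u ^ ((E ∩ Cf).card) * ((∏ k ∈ E, q k) * ∏ k ∈ X \ E, (w k - q k)))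
      volume 0 1 := fun E => (Continuous.intervalIntegrable (by continuity) _ _)
  rw [intervalIntegral.integral_congr (g := fun u => ∑ E ∈ X.powerset,
      u ^ ((E ∩ Cf).card) * ((∏ k ∈ E, q k) * ∏ k ∈ X \ E, (w k - q k))) (fun u _ => hpt u)]
  rw [intervalIntegral.integral_finset_sum (fun E _ => hint E)]
  refine Finset.sum_congr rfl fun E _ => ?_
  rw [intervalIntegral.integral_mul_const, integral_pow, one_pow,
    zero_pow (Nat.succ_ne_zero _)]
  rw [add_comm (1:ℝ)]
  push_cast
  ring

lemma gammaBound (X Cf : Finset κ) (q w : κ → ℝ) (hq0 : ∀ k, 0 ≤ q k) (hqw : ∀ k, q k ≤ w k)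
    (p : ℝ) (hp0 : 0 ≤ p) (hp1 : p ≤ 1) (hC : ∀ j ∈ Cf, p * w j ≤ q j) :
    p * ∑ E ∈ X.powerset, (1 / (1 + ((E ∩ Cf).card : ℝ))) *
        ((∏ k ∈ E, q k) * ∏ k ∈ X \ E, (w k - q k))
      ≤ (1 - (1 - p) ^ ((X ∩ Cf).card + 1)) / (1 + ((X ∩ Cf).card : ℝ)) * ∏ k ∈ X, w k := by
  have hw0 : ∀ k, 0 ≤ w k := fun k => le_trans (hq0 k) (hqw k)
  rw [gammaInt, ← intervalIntegral.integral_const_mul]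
  set c := (X ∩ Cf).card with hc
  have hle : ∫ u in (0:ℝ)..1, p * ∏ k ∈ X, ((if k ∈ Cf then u * q k else q k) + (w k - q k))
      ≤ ∫ u in (0:ℝ)..1, p * ((1 - p + p * u) ^ c * ∏ k ∈ X, w k) := by
    apply intervalIntegral.integral_mono_on (by norm_num)
    · exact Continuous.intervalIntegrable (by
        apply continuous_const.mul
        apply continuous_finset_prod
        intro k _
        by_cases hk : k ∈ Cf <;> simp [hk] <;> fun_prop) _ _
    · exact Continuous.intervalIntegrable (by fun_prop) _ _
    · intro u hu
      apply mul_le_mul_of_nonneg_left _ hp0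
      have hprod : ∏ k ∈ X, ((if k ∈ Cf then u * q k else q k) + (w k - q k))
          ≤ ∏ k ∈ X, (if k ∈ Cf then (1 - p + p * u) * w k else w k) := by
        apply Finset.prod_le_prod
        · intro k _
          by_cases hk : k ∈ Cf
          · simp only [hk, if_true]
            nlinarith [hq0 k, hqw k, hu.1, hu.2]
          · simp only [hk, if_false]
            linarith [hw0 k]
        · intro k _
          by_cases hk : k ∈ Cf
          · simp only [hk, if_true]
            nlinarith [hC k hk, hu.1, hu.2, hw0 k]
          · simp only [hk, if_false]
            linarith [hq0 k]
      refine le_trans hprod (le_of_eq ?_)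
      rw [Finset.prod_ite, Finset.prod_mul_distrib, Finset.prod_const, Finset.filter_mem_eq_inter,
        ← hc, mul_assoc]
      congr 1
      rw [← Finset.filter_mem_eq_inter, Finset.prod_filter_mul_prod_filter_not]
  refine le_trans hle (le_of_eq ?_)
  have : ∀ u : ℝ, p * ((1 - p + p * u) ^ c * ∏ k ∈ X, w k)
      = (p * (1 - p + p * u) ^ c) * ∏ k ∈ X, w k := fun u => by ring
  rw [intervalIntegral.integral_congr (fun u _ => this u), intervalIntegral.integral_mul_const,
    intAux]
  rw [add_comm (1:ℝ) (c:ℝ)]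

lemma coreLemma (D Nf Cf : Finset κ) (hNC : ∀ k ∈ Nf, k ∉ Cf)
    (q w : κ → ℝ) (hq0 : ∀ k, 0 ≤ q k) (hqw : ∀ k, q k ≤ w k)
    (p : ℝ) (hp0 : 0 ≤ p) (hp1 : p ≤ 1)
    (hN : ∀ i ∈ Nf, q i ≤ p * w i) (hC : ∀ j ∈ Cf, p * w j ≤ q j) :
    ∑ E ∈ D.powerset, (((E ∩ Nf).card : ℝ) / (1 + ((E ∩ Cf).card : ℝ)))
        * ((∏ k ∈ E, q k) * ∏ k ∈ D \ E, (w k - q k))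
      ≤ (((D ∩ Nf).card : ℝ) / (1 + ((D ∩ Cf).card : ℝ)))
        * (1 - (1 - p) ^ ((D ∩ Cf).card + 1)) * ∏ k ∈ D, w k := by
  have hw0 : ∀ k, 0 ≤ w k := fun k => le_trans (hq0 k) (hqw k)
  set c := (D ∩ Cf).card with hc
  -- step 1 : rewrite LHS as double sum
  have h1 : ∑ E ∈ D.powerset, (((E ∩ Nf).card : ℝ) / (1 + ((E ∩ Cf).card : ℝ)))
        * ((∏ k ∈ E, q k) * ∏ k ∈ D \ E, (w k - q k))
      = ∑ i ∈ D ∩ Nf, ∑ E ∈ D.powerset, (if i ∈ E then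
          (1 / (1 + ((E ∩ Cf).card : ℝ))) * ((∏ k ∈ E, q k) * ∏ k ∈ D \ E, (w k - q k))
          else 0) := by
    rw [Finset.sum_comm]
    refine Finset.sum_congr rfl fun E hE => ?_
    have hED : E ⊆ D := Finset.mem_powerset.mp hE
    have hcard : ((E ∩ Nf).card : ℝ) = ∑ i ∈ D ∩ Nf, (if i ∈ E then (1:ℝ) else 0) := by
      have : E ∩ Nf = (D ∩ Nf).filter (· ∈ E) := by
        ext k
        simp only [Finset.mem_inter, Finset.mem_filter]
        constructor
        · rintro ⟨h1, h2⟩; exact ⟨⟨hED h1, h2⟩, h1⟩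
        · rintro ⟨⟨_, h2⟩, h3⟩; exact ⟨h3, h2⟩
      rw [this, Finset.card_filter]
      push_cast
      rfl
    have hsplit : (((E ∩ Nf).card : ℝ) / (1 + ((E ∩ Cf).card : ℝ)))
        * ((∏ k ∈ E, q k) * ∏ k ∈ D \ E, (w k - q k))
      = ((E ∩ Nf).card : ℝ) * ((1 / (1 + ((E ∩ Cf).card : ℝ)))
        * ((∏ k ∈ E, q k) * ∏ k ∈ D \ E, (w k - q k))) := by ring
    rw [hsplit, hcard, Finset.sum_mul]
    exact Finset.sum_congr rfl fun i _ => by rw [ite_mul, one_mul, zero_mul]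
  rw [h1]
  -- step 2 : inner sum for fixed i
  have h2 : ∀ i ∈ D ∩ Nf, ∑ E ∈ D.powerset, (if i ∈ E then
        (1 / (1 + ((E ∩ Cf).card : ℝ))) * ((∏ k ∈ E, q k) * ∏ k ∈ D \ E, (w k - q k))
        else 0)
      = q i * ∑ E ∈ (D.erase i).powerset, (1 / (1 + ((E ∩ Cf).card : ℝ)))
          * ((∏ k ∈ E, q k) * ∏ k ∈ (D.erase i) \ E, (w k - q k)) := by
    intro i hi
    obtain ⟨hiD, hiN⟩ := Finset.mem_inter.mp hi
    have hiC : i ∉ Cf := hNC i hiN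
    have hie : i ∉ D.erase i := Finset.notMem_erase i D
    have hD : D = insert i (D.erase i) := (Finset.insert_erase hiD).symm
    rw [Finset.mul_sum]
    conv_lhs => rw [hD]
    rw [Finset.sum_powerset_insert hie]
    have hzero : ∑ E ∈ (D.erase i).powerset, (if i ∈ E then
        (1 / (1 + ((E ∩ Cf).card : ℝ))) * ((∏ k ∈ E, q k)
          * ∏ k ∈ insert i (D.erase i) \ E, (w k - q k)) else 0) = 0 := by
      refine Finset.sum_eq_zero fun E hE => ?_
      have : i ∉ E := fun h => hie (Finset.mem_powerset.mp hE h)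
      simp [this]
    rw [hzero, zero_add]
    refine Finset.sum_congr rfl fun E hE => ?_
    have hiE : i ∉ E := fun h => hie (Finset.mem_powerset.mp hE h)
    rw [if_pos (Finset.mem_insert_self i E)]
    have e1 : insert i E ∩ Cf = E ∩ Cf := Finset.insert_inter_of_notMem hiC
    have e2 : insert i (D.erase i) \ insert i E = (D.erase i) \ E := by
      ext k
      simp only [Finset.mem_sdiff, Finset.mem_insert, Finset.mem_erase]
      constructor
      · rintro ⟨hk1, hk2⟩
        rcases hk1 with rfl | hk1
        · exact absurd (Or.inl rfl) hk2
        · exact ⟨hk1, fun h => hk2 (Or.inr h)⟩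
      · rintro ⟨⟨hk0, hk1⟩, hk2⟩
        exact ⟨Or.inr ⟨hk0, hk1⟩, fun h => by rcases h with rfl | h; exact hk0 rfl; exact hk2 h⟩
    rw [e1, e2, Finset.prod_insert hiE]
    ring
  rw [Finset.sum_congr rfl h2]
  -- step 3 : bound each term
  have h3 : ∀ i ∈ D ∩ Nf, q i * ∑ E ∈ (D.erase i).powerset, (1 / (1 + ((E ∩ Cf).card : ℝ)))
          * ((∏ k ∈ E, q k) * ∏ k ∈ (D.erase i) \ E, (w k - q k))
      ≤ (1 - (1 - p) ^ (c + 1)) / (1 + (c : ℝ)) * ∏ k ∈ D, w k := by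
    intro i hi
    obtain ⟨hiD, hiN⟩ := Finset.mem_inter.mp hi
    have hiC : i ∉ Cf := hNC i hiN
    have hcc : (D.erase i) ∩ Cf = D ∩ Cf := by
      ext k
      simp only [Finset.mem_inter, Finset.mem_erase]
      exact ⟨fun ⟨⟨_, h1⟩, h2⟩ => ⟨h1, h2⟩,
        fun ⟨h1, h2⟩ => ⟨⟨fun he => hiC (he ▸ h2), h1⟩, h2⟩⟩
    have hΓ0 : 0 ≤ ∑ E ∈ (D.erase i).powerset, (1 / (1 + ((E ∩ Cf).card : ℝ)))
          * ((∏ k ∈ E, q k) * ∏ k ∈ (D.erase i) \ E, (w k - q k)) := by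
      refine Finset.sum_nonneg fun E _ => ?_
      have : (0:ℝ) ≤ 1 + ((E ∩ Cf).card : ℝ) := by positivity
      refine mul_nonneg (by positivity) (mul_nonneg ?_ ?_)
      · exact Finset.prod_nonneg fun k _ => hq0 k
      · exact Finset.prod_nonneg fun k _ => by linarith [hqw k]
    have step : q i * ∑ E ∈ (D.erase i).powerset, (1 / (1 + ((E ∩ Cf).card : ℝ)))
          * ((∏ k ∈ E, q k) * ∏ k ∈ (D.erase i) \ E, (w k - q k))
        ≤ w i * (p * ∑ E ∈ (D.erase i).powerset, (1 / (1 + ((E ∩ Cf).card : ℝ)))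
          * ((∏ k ∈ E, q k) * ∏ k ∈ (D.erase i) \ E, (w k - q k))) := by
      rw [← mul_assoc, mul_comm (w i) p]
      exact mul_le_mul_of_nonneg_right (hN i hiN) hΓ0
    refine le_trans step ?_
    have hgb := gammaBound (D.erase i) Cf q w hq0 hqw p hp0 hp1 hC
    rw [hcc, ← hc] at hgb
    calc w i * (p * ∑ E ∈ (D.erase i).powerset, (1 / (1 + ((E ∩ Cf).card : ℝ)))
          * ((∏ k ∈ E, q k) * ∏ k ∈ (D.erase i) \ E, (w k - q k)))
        ≤ w i * ((1 - (1 - p) ^ (c + 1)) / (1 + (c : ℝ)) * ∏ k ∈ D.erase i, w k) :=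
          mul_le_mul_of_nonneg_left hgb (hw0 i)
      _ = (1 - (1 - p) ^ (c + 1)) / (1 + (c : ℝ)) * ∏ k ∈ D, w k := by
          rw [← Finset.mul_prod_erase D w hiD]; ring
  calc ∑ i ∈ D ∩ Nf, q i * ∑ E ∈ (D.erase i).powerset, (1 / (1 + ((E ∩ Cf).card : ℝ)))
          * ((∏ k ∈ E, q k) * ∏ k ∈ (D.erase i) \ E, (w k - q k))
      ≤ ∑ i ∈ D ∩ Nf, (1 - (1 - p) ^ (c + 1)) / (1 + (c : ℝ)) * ∏ k ∈ D, w k :=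
        Finset.sum_le_sum h3
    _ = (((D ∩ Nf).card : ℝ) / (1 + (c : ℝ))) * (1 - (1 - p) ^ (c + 1)) * ∏ k ∈ D, w k := by
        rw [Finset.sum_const, nsmul_eq_mul]; ring

end AuxCore




section Counting

variable {Ω : Type*} {n m : ℕ} {T : Fin (n + m) → Ω → ℝ} {I₀ : Set (Fin n)}

noncomputable def nullF (n m : ℕ) (I₀ : Set (Fin n)) : Finset (Fin (n + m)) :=
  (I₀.toFinite.toFinset).image (Fin.castAdd m)

noncomputable def ctrlF (n m : ℕ) : Finset (Fin (n + m)) :=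
  Finset.univ.image (Fin.natAdd n)

lemma mem_nullF {k : Fin (n + m)} : k ∈ nullF n m I₀ ↔ ∃ i ∈ I₀, Fin.castAdd m i = k := by
  simp only [nullF, Finset.mem_image, Set.Finite.mem_toFinset]

lemma mem_ctrlF {k : Fin (n + m)} : k ∈ ctrlF n m ↔ ∃ j : Fin m, Fin.natAdd n j = k := by
  simp [ctrlF]

lemma nullF_disj_ctrlF : ∀ k ∈ nullF n m I₀, k ∉ ctrlF n m := by
  intro k hk hk'
  obtain ⟨i, _, rfl⟩ := mem_nullF.mp hk
  obtain ⟨j, hj⟩ := mem_ctrlF.mp hk'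
  have h1 : (Fin.natAdd n j).val = n + j.val := rfl
  have h2 : (Fin.castAdd m i).val = i.val := rfl
  have := congrArg Fin.val hj
  rw [h1, h2] at this
  omega

lemma castAdd_inj : Function.Injective (Fin.castAdd m : Fin n → Fin (n + m)) := by
  intro a b hab
  have := congrArg Fin.val hab
  exact Fin.ext this

lemma natAdd_inj : Function.Injective (Fin.natAdd n : Fin m → Fin (n + m)) := by
  intro a b hab
  have : n + a.val = n + b.val := congrArg Fin.val hab
  exact Fin.ext (by omega)

lemma vcount_eq {ω : Ω} {u : ℝ} {E : Finset (Fin (n + m))}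
    (hE : ∀ k, T k ω ≤ u ↔ k ∈ E) :
    Vcount n m T I₀ ω u = (E ∩ nullF n m I₀).card := by
  classical
  have h1 : {i : Fin n | i ∈ I₀ ∧ T (Fin.castAdd m i) ω ≤ u}
      = {i : Fin n | i ∈ I₀ ∧ Fin.castAdd m i ∈ E} := by
    ext i; simp [hE]
  have h2 : (Fin.castAdd m) '' {i : Fin n | i ∈ I₀ ∧ Fin.castAdd m i ∈ E}
      = ↑(E ∩ nullF n m I₀) := by
    ext k
    simp only [Set.mem_image, Set.mem_setOf_eq, Finset.coe_inter, Set.mem_inter_iff,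
      Finset.mem_coe, mem_nullF]
    constructor
    · rintro ⟨i, ⟨hi, hiE⟩, rfl⟩; exact ⟨hiE, i, hi, rfl⟩
    · rintro ⟨hkE, i, hi, rfl⟩; exact ⟨i, ⟨hi, hkE⟩, rfl⟩
  rw [Vcount, h1, ← Set.ncard_image_of_injective _ castAdd_inj, h2, Set.ncard_coe_finset]

lemma vnc_eq {ω : Ω} {u : ℝ} {E : Finset (Fin (n + m))}
    (hE : ∀ k, T k ω ≤ u ↔ k ∈ E) :
    VncCount n m T ω u = (E ∩ ctrlF n m).card := by
  classical
  have h1 : {j : Fin m | T (Fin.natAdd n j) ω ≤ u}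
      = {j : Fin m | Fin.natAdd n j ∈ E} := by
    ext j; simp [hE]
  have h2 : (Fin.natAdd n) '' {j : Fin m | Fin.natAdd n j ∈ E}
      = ↑(E ∩ ctrlF n m) := by
    ext k
    simp only [Set.mem_image, Set.mem_setOf_eq, Finset.coe_inter, Set.mem_inter_iff,
      Finset.mem_coe, mem_ctrlF]
    constructor
    · rintro ⟨j, hj, rfl⟩; exact ⟨hj, j, rfl⟩
    · rintro ⟨hkE, j, rfl⟩; exact ⟨j, hkE, rfl⟩
  rw [VncCount, h1, ← Set.ncard_image_of_injective _ natAdd_inj, h2, Set.ncard_coe_finset]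

lemma vcount_sum (ω : Ω) (u : ℝ) :
    Vcount n m T I₀ ω u
      = ∑ i : Fin n, if i ∈ I₀ ∧ T (Fin.castAdd m i) ω ≤ u then 1 else 0 := by
  classical
  rw [Vcount, ← Finset.card_filter]
  rw [← Set.ncard_coe_finset]
  congr 1
  ext i; simp

lemma scount_sum (ω : Ω) (u : ℝ) :
    Scount n m T I₀ ω u
      = ∑ i : Fin n, if i ∉ I₀ ∧ T (Fin.castAdd m i) ω ≤ u then 1 else 0 := by
  classical
  rw [Scount, ← Finset.card_filter, ← Set.ncard_coe_finset]
  congr 1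
  ext i; simp

lemma vnc_sum (ω : Ω) (u : ℝ) :
    VncCount n m T ω u = ∑ j : Fin m, if T (Fin.natAdd n j) ω ≤ u then 1 else 0 := by
  classical
  rw [VncCount, ← Finset.card_filter, ← Set.ncard_coe_finset]
  congr 1
  ext j; simp

lemma vcount_le (ω : Ω) (u : ℝ) : Vcount n m T I₀ ω u ≤ n := by
  rw [vcount_sum]
  calc (∑ i : Fin n, if i ∈ I₀ ∧ T (Fin.castAdd m i) ω ≤ u then 1 else 0)
      ≤ ∑ _i : Fin n, 1 := Finset.sum_le_sum (fun i _ => by split <;> omega)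
    _ = n := by simp

end Counting

section Meas

variable {Ω : Type*} [MeasurableSpace Ω] {μ : Measure Ω} {n m : ℕ}
  {T : Fin (n + m) → Ω → ℝ} {I₀ : Set (Fin n)}

lemma meas_vcount (hmeas : ∀ k, Measurable (T k)) (u : ℝ) :
    Measurable (fun ω => Vcount n m T I₀ ω u) := by
  simp only [vcount_sum]
  refine Finset.measurable_sum _ (fun i _ => ?_)
  refine Measurable.ite ?_ measurable_const measurable_const
  by_cases hi : i ∈ I₀
  · simp only [hi, true_and]
    exact (hmeas _) measurableSet_Iic
  · simp only [hi, false_and, Set.setOf_false]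
    exact MeasurableSet.empty

lemma meas_scount (hmeas : ∀ k, Measurable (T k)) (u : ℝ) :
    Measurable (fun ω => Scount n m T I₀ ω u) := by
  simp only [scount_sum]
  refine Finset.measurable_sum _ (fun i _ => ?_)
  refine Measurable.ite ?_ measurable_const measurable_const
  by_cases hi : i ∈ I₀
  · simp only [hi, not_true, false_and, Set.setOf_false]
    exact MeasurableSet.empty
  · simp only [hi, not_false_iff, true_and]
    exact (hmeas _) measurableSet_Iic

lemma meas_vnc (hmeas : ∀ k, Measurable (T k)) (u : ℝ) :
    Measurable (fun ω => VncCount n m T ω u) := by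
  simp only [vnc_sum]
  refine Finset.measurable_sum _ (fun j _ => ?_)
  exact Measurable.ite ((hmeas _) measurableSet_Iic) measurable_const measurable_const

lemma meas_Mproc (hmeas : ∀ k, Measurable (T k)) (u : ℝ) :
    Measurable (Mproc n m T I₀ u) := by
  have h1 : Measurable (fun ω => (Vcount n m T I₀ ω u : ℝ)) :=
    measurable_from_top.comp (meas_vcount hmeas u)
  have h2 : Measurable (fun ω => (VncCount n m T ω u : ℝ)) :=
    measurable_from_top.comp (meas_vnc hmeas u)
  exact (h1.mul measurable_const).div (measurable_const.add h2)

lemma Mproc_nonneg (u : ℝ) (ω : Ω) : 0 ≤ Mproc n m T I₀ u ω := by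
  rw [Mproc]
  positivity

lemma Mproc_le (u : ℝ) (ω : Ω) : Mproc n m T I₀ u ω ≤ (n : ℝ) * (1 + m) := by
  rw [Mproc]
  have h1 : (0:ℝ) ≤ (Vcount n m T I₀ ω u : ℝ) * (1 + m) := by positivity
  have h2 : (1:ℝ) ≤ 1 + (VncCount n m T ω u : ℝ) := by
    have : (0:ℝ) ≤ (VncCount n m T ω u : ℝ) := Nat.cast_nonneg _
    linarith
  calc (Vcount n m T I₀ ω u : ℝ) * (1 + m) / (1 + (VncCount n m T ω u : ℝ))
      ≤ (Vcount n m T I₀ ω u : ℝ) * (1 + m) := div_le_self h1 h2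
    _ ≤ (n : ℝ) * (1 + m) := by
        have := vcount_le (T := T) (I₀ := I₀) ω u
        have : (Vcount n m T I₀ ω u : ℝ) ≤ n := by exact_mod_cast this
        nlinarith

lemma integrable_of_bound [IsFiniteMeasure μ] {f : Ω → ℝ} (hf : Measurable f) (C : ℝ)
    (h : ∀ ω, |f ω| ≤ C) : Integrable f μ :=
  (integrable_const C).mono' hf.aestronglyMeasurable
    (Filter.Eventually.of_forall (by simpa [Real.norm_eq_abs] using h))

lemma integrable_Mproc [IsFiniteMeasure μ] (hmeas : ∀ k, Measurable (T k)) (u : ℝ) :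
    Integrable (Mproc n m T I₀ u) μ :=
  integrable_of_bound (meas_Mproc hmeas u) ((n : ℝ) * (1 + m)) (fun ω => by
    rw [abs_of_nonneg (Mproc_nonneg u ω)]; exact Mproc_le u ω)

noncomputable def PhiMap (n m : ℕ) (T : Fin (n + m) → Ω → ℝ) (t : ℝ) :
    Ω → (Fin (n + m) → ℝ) := fun ω k => if T k ω ≤ t then 0 else T k ω

lemma meas_PhiMap (hmeas : ∀ k, Measurable (T k)) (t : ℝ) :
    Measurable (PhiMap n m T t) :=
  measurable_pi_lambda _ fun k =>
    Measurable.ite ((hmeas k) measurableSet_Iic) measurable_const (hmeas k)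

noncomputable def HV (n m : ℕ) (I₀ : Set (Fin n)) (u : ℝ) : (Fin (n + m) → ℝ) → ℕ :=
  fun x => ∑ i : Fin n, if i ∈ I₀ ∧ x (Fin.castAdd m i) ≤ u then 1 else 0

noncomputable def HS (n m : ℕ) (I₀ : Set (Fin n)) (u : ℝ) : (Fin (n + m) → ℝ) → ℕ :=
  fun x => ∑ i : Fin n, if i ∉ I₀ ∧ x (Fin.castAdd m i) ≤ u then 1 else 0

noncomputable def HC (n m : ℕ) (u : ℝ) : (Fin (n + m) → ℝ) → ℕ :=
  fun x => ∑ j : Fin m, if x (Fin.natAdd n j) ≤ u then 1 else 0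

lemma meas_HV (u : ℝ) : Measurable (HV n m I₀ u) := by
  refine Finset.measurable_sum _ (fun i _ => ?_)
  refine Measurable.ite ?_ measurable_const measurable_const
  by_cases hi : i ∈ I₀
  · simp only [hi, true_and]
    exact (measurable_pi_apply _) measurableSet_Iic
  · simp only [hi, false_and, Set.setOf_false]
    exact MeasurableSet.empty

lemma meas_HS (u : ℝ) : Measurable (HS n m I₀ u) := by
  refine Finset.measurable_sum _ (fun i _ => ?_)
  refine Measurable.ite ?_ measurable_const measurable_const
  by_cases hi : i ∈ I₀
  · simp only [hi, not_true, false_and, Set.setOf_false]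
    exact MeasurableSet.empty
  · simp only [hi, not_false_iff, true_and]
    exact (measurable_pi_apply _) measurableSet_Iic

lemma meas_HC (u : ℝ) : Measurable (HC n m u) := by
  refine Finset.measurable_sum _ (fun j _ => ?_)
  exact Measurable.ite ((measurable_pi_apply _) measurableSet_Iic)
    measurable_const measurable_const

lemma phi_le_iff (hrange : ∀ k, ∀ ω, T k ω ∈ Set.Ioo (0 : ℝ) 1) {t u : ℝ}
    (ht0 : 0 ≤ t) (htu : t ≤ u) (ω : Ω) (k : Fin (n + m)) :
    T k ω ≤ u ↔ PhiMap n m T t ω k ≤ u := by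
  rw [PhiMap]
  by_cases hk : T k ω ≤ t
  · simp only [hk, if_true]
    constructor
    · intro _; linarith
    · intro _; linarith
  · simp only [hk, if_false]

lemma count_comp_V (hrange : ∀ k, ∀ ω, T k ω ∈ Set.Ioo (0 : ℝ) 1) {t u : ℝ}
    (ht0 : 0 ≤ t) (htu : t ≤ u) (ω : Ω) :
    Vcount n m T I₀ ω u = HV n m I₀ u (PhiMap n m T t ω) := by
  rw [vcount_sum, HV]
  exact Finset.sum_congr rfl fun i _ => by
    rw [if_congr (and_congr_right fun _ => phi_le_iff hrange ht0 htu ω _) rfl rfl]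

lemma count_comp_S (hrange : ∀ k, ∀ ω, T k ω ∈ Set.Ioo (0 : ℝ) 1) {t u : ℝ}
    (ht0 : 0 ≤ t) (htu : t ≤ u) (ω : Ω) :
    Scount n m T I₀ ω u = HS n m I₀ u (PhiMap n m T t ω) := by
  rw [scount_sum, HS]
  exact Finset.sum_congr rfl fun i _ => by
    rw [if_congr (and_congr_right fun _ => phi_le_iff hrange ht0 htu ω _) rfl rfl]

lemma count_comp_C (hrange : ∀ k, ∀ ω, T k ω ∈ Set.Ioo (0 : ℝ) 1) {t u : ℝ}
    (ht0 : 0 ≤ t) (htu : t ≤ u) (ω : Ω) :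
    VncCount n m T ω u = HC n m u (PhiMap n m T t ω) := by
  rw [vnc_sum, HC]
  exact Finset.sum_congr rfl fun j _ => by
    rw [if_congr (phi_le_iff hrange ht0 htu ω _) rfl rfl]

end Meas




section Key

variable {Ω : Type*} [MeasurableSpace Ω] {μ : Measure Ω} {n m : ℕ}
  {T : Fin (n + m) → Ω → ℝ} {I₀ : Set (Fin n)}

set_option maxHeartbeats 1000000 in
lemma key_setIntegral [IsProbabilityMeasure μ]
    (hmeas : ∀ k, Measurable (T k))
    (hrange : ∀ k, ∀ ω, T k ω ∈ Set.Ioo (0 : ℝ) 1)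
    (hindep : iIndepFun (m := fun _ : Fin (n + m) => (inferInstance : MeasurableSpace ℝ)) T μ)
    {s t p : ℝ} (hs0 : 0 ≤ s) (hst : s ≤ t) (hp0 : 0 ≤ p) (hp1 : p ≤ 1)
    (hnull : ∀ i ∈ I₀, cdf' μ (T (Fin.castAdd m i)) s ≤ p * cdf' μ (T (Fin.castAdd m i)) t)
    (hctrl : ∀ j : Fin m, p * cdf' μ (T (Fin.natAdd n j)) t ≤ cdf' μ (T (Fin.natAdd n j)) s)
    (B : Set (Fin (n + m) → ℝ)) (hB : MeasurableSet B) :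
    ∫ ω in PhiMap n m T t ⁻¹' B, Mproc n m T I₀ s ω ∂μ
      ≤ ∫ ω in PhiMap n m T t ⁻¹' B,
          (Mproc n m T I₀ t ω * (1 - (1 - p) ^ (VncCount n m T ω t + 1))) ∂μ := by
  set A : Set Ω := PhiMap n m T t ⁻¹' B with hAdef
  have hA : MeasurableSet A := meas_PhiMap hmeas t hB
  set Nf : Finset (Fin (n + m)) := nullF n m I₀ with hNf
  set Cf : Finset (Fin (n + m)) := ctrlF n m with hCf
  set q : Fin (n + m) → ℝ := fun k => cdf' μ (T k) s with hq
  set w : Fin (n + m) → ℝ := fun k => cdf' μ (T k) t with hw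
  set vals : Finset (Fin (n + m)) → ℝ :=
    fun E => ((E ∩ Nf).card : ℝ) * (1 + (m : ℝ)) / (1 + ((E ∩ Cf).card : ℝ)) with hvals
  set valg : Finset (Fin (n + m)) → ℝ :=
    fun D => vals D * (1 - (1 - p) ^ ((D ∩ Cf).card + 1)) with hvalg
  set OmD : Finset (Fin (n + m)) → Set Ω := fun D => {ω | ∀ k, T k ω ≤ t ↔ k ∈ D} with hOmD
  set cell : Finset (Fin (n + m)) → Finset (Fin (n + m)) → Set Ω :=
    fun D E => OmD D ∩ {ω | ∀ k, T k ω ≤ s ↔ k ∈ E} with hcell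
  set Out : Finset (Fin (n + m)) → Set Ω :=
    fun D => {ω | (fun k => if k ∈ D then (0:ℝ) else T k ω) ∈ B ∧ ∀ k, k ∉ D → t < T k ω}
    with hOut
  set gfun : Ω → ℝ :=
    fun ω => Mproc n m T I₀ t ω * (1 - (1 - p) ^ (VncCount n m T ω t + 1)) with hgfun
  -- basic measurability facts
  have hOmD_meas : ∀ D, MeasurableSet (OmD D) := by
    intro D
    have : OmD D = ⋂ k, {ω | T k ω ≤ t ↔ k ∈ D} := by
      ext ω; simp [hOmD, Set.mem_iInter]
    rw [this]
    refine MeasurableSet.iInter fun k => ?_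
    by_cases hk : k ∈ D
    · simp only [hk, iff_true]
      exact (hmeas k) (measurableSet_Iic : MeasurableSet (Set.Iic t))
    · simp only [hk, iff_false, not_le]
      exact (hmeas k) (measurableSet_Ioi : MeasurableSet (Set.Ioi t))
  have hcellpat_meas : ∀ E : Finset (Fin (n + m)), MeasurableSet {ω | ∀ k, T k ω ≤ s ↔ k ∈ E} := by
    intro E
    have : {ω | ∀ k, T k ω ≤ s ↔ k ∈ E} = ⋂ k, {ω | T k ω ≤ s ↔ k ∈ E} := by
      ext ω; simp [Set.mem_iInter]
    rw [this]
    refine MeasurableSet.iInter fun k => ?_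
    by_cases hk : k ∈ E
    · simp only [hk, iff_true]
      exact (hmeas k) (measurableSet_Iic : MeasurableSet (Set.Iic s))
    · simp only [hk, iff_false, not_le]
      exact (hmeas k) (measurableSet_Ioi : MeasurableSet (Set.Ioi s))
  have hcell_meas : ∀ D E, MeasurableSet (cell D E) :=
    fun D E => (hOmD_meas D).inter (hcellpat_meas E)
  -- integrability
  have hMs_int : Integrable (Mproc n m T I₀ s) μ := integrable_Mproc hmeas s
  have hfactor_mem : ∀ ω, 0 ≤ 1 - (1 - p) ^ (VncCount n m T ω t + 1) ∧
      1 - (1 - p) ^ (VncCount n m T ω t + 1) ≤ 1 := by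
    intro ω
    have h1 : (0:ℝ) ≤ (1 - p) ^ (VncCount n m T ω t + 1) := pow_nonneg (by linarith) _
    have h2 : (1 - p) ^ (VncCount n m T ω t + 1) ≤ 1 :=
      pow_le_one₀ (by linarith) (by linarith)
    constructor <;> linarith
  have hg_meas : Measurable gfun := by
    apply (meas_Mproc hmeas t).mul
    have : (fun ω => 1 - (1 - p) ^ (VncCount n m T ω t + 1))
        = (fun c : ℕ => 1 - (1 - p) ^ (c + 1)) ∘ (fun ω => VncCount n m T ω t) := rfl
    rw [this]
    exact measurable_from_top.comp (meas_vnc hmeas t)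
  have hg_bound : ∀ ω, |gfun ω| ≤ (n : ℝ) * (1 + m) := by
    intro ω
    have h0 : 0 ≤ gfun ω :=
      mul_nonneg (Mproc_nonneg t ω) (hfactor_mem ω).1
    rw [abs_of_nonneg h0, hgfun]
    calc Mproc n m T I₀ t ω * (1 - (1 - p) ^ (VncCount n m T ω t + 1))
        ≤ Mproc n m T I₀ t ω :=
          mul_le_of_le_one_right (Mproc_nonneg t ω) (hfactor_mem ω).2
      _ ≤ (n : ℝ) * (1 + m) := Mproc_le t ω
  have hg_int : Integrable gfun μ := integrable_of_bound hg_meas _ hg_bound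
  -- pointwise description of PhiMap on OmD D
  have hPhiD : ∀ (D : Finset (Fin (n + m))) (ω : Ω), (∀ k, T k ω ≤ t ↔ k ∈ D) →
      PhiMap n m T t ω = (fun k => if k ∈ D then (0:ℝ) else T k ω) := by
    intro D ω h
    funext k
    rw [PhiMap]
    by_cases hk : k ∈ D
    · rw [if_pos ((h k).mpr hk), if_pos hk]
    · rw [if_neg (fun hle => hk ((h k).mp hle)), if_neg hk]
  -- set identities
  have hset2 : ∀ D, A ∩ OmD D = Out D ∩ ⋂ k ∈ D, (T k)⁻¹' (Set.Iic t) := by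
    intro D
    ext ω
    simp only [hAdef, Set.mem_inter_iff, Set.mem_preimage, hOmD, hOut, Set.mem_setOf_eq,
      Set.mem_iInter, Set.mem_Iic]
    constructor
    · rintro ⟨hA', hD⟩
      refine ⟨⟨by rw [← hPhiD D ω hD]; exact hA', fun k hk => not_le.mp fun hle => hk ((hD k).mp hle)⟩,
        fun k hk => (hD k).mpr hk⟩
    · rintro ⟨⟨hB', hgt⟩, hin⟩
      have hD : ∀ k, T k ω ≤ t ↔ k ∈ D := by
        intro k
        constructor
        · intro hle
          by_contra hk
          exact absurd hle (not_le.mpr (hgt k hk))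
        · exact fun hk => hin k hk
      exact ⟨by rw [hPhiD D ω hD]; exact hB', hD⟩
  have hset1 : ∀ D E : Finset (Fin (n + m)), E ⊆ D → A ∩ cell D E
      = Out D ∩ ⋂ k ∈ D, (T k)⁻¹' (if k ∈ E then Set.Iic s else Set.Ioc s t) := by
    intro D E hED
    ext ω
    simp only [hAdef, Set.mem_inter_iff, Set.mem_preimage, hcell, hOmD, hOut, Set.mem_setOf_eq,
      Set.mem_iInter]
    constructor
    · rintro ⟨hA', hDt, hEs⟩
      refine ⟨⟨by rw [← hPhiD D ω hDt]; exact hA',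
        fun k hk => not_le.mp fun hle => hk ((hDt k).mp hle)⟩, fun k hk => ?_⟩
      by_cases hkE : k ∈ E
      · simp only [hkE, if_true, Set.mem_Iic]
        exact (hEs k).mpr hkE
      · simp only [hkE, if_false, Set.mem_Ioc]
        exact ⟨not_le.mp fun hle => hkE ((hEs k).mp hle), (hDt k).mpr hk⟩
    · rintro ⟨⟨hB', hgt⟩, hin⟩
      have hDt : ∀ k, T k ω ≤ t ↔ k ∈ D := by
        intro k
        constructor
        · intro hle
          by_contra hk
          exact absurd hle (not_le.mpr (hgt k hk))
        · intro hk
          have := hin k hk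
          by_cases hkE : k ∈ E
          · simp only [hkE, if_true, Set.mem_Iic] at this
            linarith
          · simp only [hkE, if_false, Set.mem_Ioc] at this
            exact this.2
      have hEs : ∀ k, T k ω ≤ s ↔ k ∈ E := by
        intro k
        constructor
        · intro hle
          by_contra hkE
          by_cases hkD : k ∈ D
          · have := hin k hkD
            simp only [hkE, if_false, Set.mem_Ioc] at this
            linarith [this.1]
          · have := hgt k hkD
            linarith
        · intro hkE
          have := hin k (hED hkE)
          simp only [hkE, if_true, Set.mem_Iic] at this
          exact this
      exact ⟨by rw [hPhiD D ω hDt]; exact hB', hDt, hEs⟩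
  -- independence factorization
  have hfac : ∀ (D : Finset (Fin (n + m))) (S : Fin (n + m) → Set ℝ), (∀ k, MeasurableSet (S k)) →
      μ (Out D ∩ ⋂ k ∈ D, (T k)⁻¹' (S k))
        = μ (Out D) * ∏ k ∈ D, μ ((T k)⁻¹' (S k)) := by
    intro D S hS
    have hind := hindep.indepFun_finset D Dᶜ disjoint_compl_right hmeas
    rw [indepFun_iff_measure_inter_preimage_eq_mul] at hind
    set hD : (↥(Dᶜ : Finset (Fin (n + m))) → ℝ) → (Fin (n + m) → ℝ) :=
      fun y k => if hk : k ∈ D then 0 else y ⟨k, Finset.mem_compl.mpr hk⟩ with hhDdef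
    have hhD : Measurable hD := by
      refine measurable_pi_lambda _ fun k => ?_
      by_cases hk : k ∈ D
      · simp only [hhDdef, dif_pos hk]
        exact measurable_const
      · simp only [hhDdef, dif_neg hk]
        exact measurable_pi_apply _
    set P1 : Set (↥D → ℝ) := Set.univ.pi (fun i => S i) with hP1def
    set P2 : Set (↥(Dᶜ : Finset (Fin (n + m))) → ℝ) := hD ⁻¹' B ∩ Set.univ.pi (fun _ => Set.Ioi t)
      with hP2def
    have hP1 : MeasurableSet P1 := MeasurableSet.univ_pi fun i => hS i
    have hP2 : MeasurableSet P2 :=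
      (hhD hB).inter (MeasurableSet.univ_pi fun _ => measurableSet_Ioi)
    have e1 : (⋂ k ∈ D, (T k)⁻¹' (S k)) = (fun ω (i : ↥D) => T i ω) ⁻¹' P1 := by
      ext ω
      simp only [Set.mem_iInter, Set.mem_preimage, hP1def, Set.mem_pi, Set.mem_univ,
        forall_true_left]
      exact ⟨fun h i => h i i.2, fun h k hk => h ⟨k, hk⟩⟩
    have e2 : Out D = (fun ω (i : ↥(Dᶜ : Finset (Fin (n + m)))) => T i ω) ⁻¹' P2 := by
      ext ω
      simp only [hOut, Set.mem_setOf_eq, Set.mem_preimage, hP2def, Set.mem_inter_iff,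
        Set.mem_pi, Set.mem_univ, forall_true_left, Set.mem_Ioi]
      constructor
      · rintro ⟨hB', hgt⟩
        constructor
        · have : hD (fun i : ↥(Dᶜ : Finset (Fin (n + m))) => T i ω)
              = fun k => if k ∈ D then (0:ℝ) else T k ω := by
            funext k
            by_cases hk : k ∈ D
            · simp only [hhDdef, dif_pos hk, if_pos hk]
            · simp only [hhDdef, dif_neg hk, if_neg hk]
          rw [this]
          exact hB'
        · exact fun i => hgt i (Finset.mem_compl.mp i.2)
      · rintro ⟨hB', hgt⟩
        constructor
        · have : hD (fun i : ↥(Dᶜ : Finset (Fin (n + m))) => T i ω)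
              = fun k => if k ∈ D then (0:ℝ) else T k ω := by
            funext k
            by_cases hk : k ∈ D
            · simp only [hhDdef, dif_pos hk, if_pos hk]
            · simp only [hhDdef, dif_neg hk, if_neg hk]
          rw [this] at hB'
          exact hB'
        · exact fun k hk => hgt ⟨k, Finset.mem_compl.mpr hk⟩
    have hprod : μ ((fun ω (i : ↥D) => T i ω) ⁻¹' P1) = ∏ k ∈ D, μ ((T k)⁻¹' (S k)) := by
      rw [← e1]
      exact hindep.meas_biInter fun k hk => ⟨S k, hS k, rfl⟩
    rw [Set.inter_comm, e1, e2, hind P1 P2 hP1 hP2, hprod, ← e2, mul_comm]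
  -- cdf facts
  have hIic : ∀ (k : Fin (n + m)) (u : ℝ), (μ ((T k)⁻¹' Set.Iic u)).toReal = cdf' μ (T k) u := by
    intro k u
    rfl
  have hq0 : ∀ k, 0 ≤ q k := fun k => ENNReal.toReal_nonneg
  have hqw : ∀ k, q k ≤ w k := by
    intro k
    show (μ {ω | T k ω ≤ s}).toReal ≤ (μ {ω | T k ω ≤ t}).toReal
    exact (ENNReal.toReal_le_toReal (measure_ne_top μ _) (measure_ne_top μ _)).mpr
      (measure_mono fun ω (hω : T k ω ≤ s) => le_trans hω hst)
  have hIoc : ∀ k : Fin (n + m), (μ ((T k)⁻¹' Set.Ioc s t)).toReal = w k - q k := by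
    intro k
    have hsub : (T k)⁻¹' Set.Iic s ⊆ (T k)⁻¹' Set.Iic t :=
      fun ω (hω : T k ω ≤ s) => le_trans hω hst
    have hdiff : (T k)⁻¹' Set.Ioc s t = (T k)⁻¹' Set.Iic t \ (T k)⁻¹' Set.Iic s := by
      ext ω
      simp only [Set.mem_preimage, Set.mem_Ioc, Set.mem_diff, Set.mem_Iic, not_le]
      exact ⟨fun ⟨h1, h2⟩ => ⟨h2, h1⟩, fun ⟨h1, h2⟩ => ⟨h2, h1⟩⟩
    rw [hdiff, measure_diff hsub ((hmeas k) (measurableSet_Iic :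
        MeasurableSet (Set.Iic s))).nullMeasurableSet (measure_ne_top μ _),
      ENNReal.toReal_sub_of_le (measure_mono hsub) (measure_ne_top μ _), hIic, hIic]
  have hNC : ∀ k ∈ Nf, k ∉ Cf := nullF_disj_ctrlF
  have hN : ∀ i ∈ Nf, q i ≤ p * w i := by
    intro k hk
    obtain ⟨i, hi, rfl⟩ := mem_nullF.mp hk
    exact hnull i hi
  have hC : ∀ j ∈ Cf, p * w j ≤ q j := by
    intro k hk
    obtain ⟨j, rfl⟩ := mem_ctrlF.mp hk
    exact hctrl j
  -- per-D inequality
  have hperD : ∀ D : Finset (Fin (n + m)),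
      ∑ E ∈ D.powerset, vals E * (μ (A ∩ cell D E)).toReal
        ≤ valg D * (μ (A ∩ OmD D)).toReal := by
    intro D
    set o : ℝ := (μ (Out D)).toReal with ho
    have hmu1 : ∀ E ∈ D.powerset, (μ (A ∩ cell D E)).toReal
        = o * ((∏ k ∈ E, q k) * ∏ k ∈ D \ E, (w k - q k)) := by
      intro E hE
      have hED := Finset.mem_powerset.mp hE
      have hSmeas : ∀ k : Fin (n + m),
          MeasurableSet (if k ∈ E then Set.Iic s else Set.Ioc s t) := by
        intro k
        by_cases hk : k ∈ E
        · simp only [hk, if_true]; exact measurableSet_Iic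
        · simp only [hk, if_false]; exact measurableSet_Ioc
      rw [hset1 D E hED, hfac D _ hSmeas, ENNReal.toReal_mul, ENNReal.toReal_prod]
      have hsplitprod :
          ∏ k ∈ D, (μ ((T k)⁻¹' (if k ∈ E then Set.Iic s else Set.Ioc s t))).toReal
          = (∏ k ∈ E, q k) * ∏ k ∈ D \ E, (w k - q k) := by
        rw [← Finset.prod_filter_mul_prod_filter_not D (· ∈ E)]
        congr 1
        · rw [Finset.filter_mem_eq_inter, Finset.inter_eq_right.mpr hED]
          refine Finset.prod_congr rfl fun k hk => ?_
          rw [if_pos hk, hIic]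
        · rw [← Finset.sdiff_eq_filter]
          refine Finset.prod_congr rfl fun k hk => ?_
          rw [if_neg (Finset.mem_sdiff.mp hk).2, hIoc]
      rw [hsplitprod]
    have hmu2 : (μ (A ∩ OmD D)).toReal = o * ∏ k ∈ D, w k := by
      rw [hset2 D, hfac D _ (fun k => measurableSet_Iic), ENNReal.toReal_mul,
        ENNReal.toReal_prod]
      congr 1
    have ho0 : 0 ≤ o * (1 + (m : ℝ)) := by positivity
    have core := coreLemma D Nf Cf hNC q w hq0 hqw p hp0 hp1 hN hC
    calc ∑ E ∈ D.powerset, vals E * (μ (A ∩ cell D E)).toReal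
        = ∑ E ∈ D.powerset, (o * (1 + (m : ℝ)))
            * ((((E ∩ Nf).card : ℝ) / (1 + ((E ∩ Cf).card : ℝ)))
              * ((∏ k ∈ E, q k) * ∏ k ∈ D \ E, (w k - q k))) := by
          refine Finset.sum_congr rfl fun E hE => ?_
          rw [hmu1 E hE, hvals]
          ring
      _ = (o * (1 + (m : ℝ))) * ∑ E ∈ D.powerset,
            (((E ∩ Nf).card : ℝ) / (1 + ((E ∩ Cf).card : ℝ)))
              * ((∏ k ∈ E, q k) * ∏ k ∈ D \ E, (w k - q k)) := by
          rw [Finset.mul_sum]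
      _ ≤ (o * (1 + (m : ℝ))) * ((((D ∩ Nf).card : ℝ) / (1 + ((D ∩ Cf).card : ℝ)))
            * (1 - (1 - p) ^ ((D ∩ Cf).card + 1)) * ∏ k ∈ D, w k) :=
          mul_le_mul_of_nonneg_left core ho0
      _ = valg D * (μ (A ∩ OmD D)).toReal := by
          rw [hmu2, hvalg, hvals]
          ring
  -- partition of A by OmD
  have hU1 : ⋃ D ∈ (Finset.univ : Finset (Fin (n + m))).powerset, (A ∩ OmD D) = A := by
    ext ω
    simp only [Set.mem_iUnion, Set.mem_inter_iff, exists_prop]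
    constructor
    · rintro ⟨D, _, h, _⟩
      exact h
    · intro hω
      refine ⟨Finset.univ.filter (fun k => T k ω ≤ t),
        Finset.mem_powerset.mpr (Finset.subset_univ _), hω, ?_⟩
      intro k
      simp [hOmD]
  have hdisj1 : Set.Pairwise ↑((Finset.univ : Finset (Fin (n + m))).powerset)
      (Function.onFun Disjoint (fun D => A ∩ OmD D)) := by
    intro D1 _ D2 _ hne
    rw [Function.onFun, Set.disjoint_left]
    rintro ω ⟨_, h1⟩ ⟨_, h2⟩
    exact hne (Finset.ext fun k => (h1 k).symm.trans (h2 k))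
  have hsplit1 : ∀ f : Ω → ℝ, Integrable f μ →
      ∫ ω in A, f ω ∂μ
        = ∑ D ∈ (Finset.univ : Finset (Fin (n + m))).powerset, ∫ ω in A ∩ OmD D, f ω ∂μ := by
    intro f hf
    have hbi := integral_biUnion_finset (μ := μ) (f := f)
      ((Finset.univ : Finset (Fin (n + m))).powerset)
      (fun D _ => hA.inter (hOmD_meas D)) hdisj1 (fun D _ => hf.integrableOn)
    rw [hU1] at hbi
    exact hbi
  -- partition of A ∩ OmD D by cells
  have hsplit2 : ∀ D : Finset (Fin (n + m)),
      ∫ ω in A ∩ OmD D, Mproc n m T I₀ s ω ∂μ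
        = ∑ E ∈ D.powerset, ∫ ω in A ∩ cell D E, Mproc n m T I₀ s ω ∂μ := by
    intro D
    have hU2 : ⋃ E ∈ D.powerset, (A ∩ cell D E) = A ∩ OmD D := by
      ext ω
      simp only [Set.mem_iUnion, Set.mem_inter_iff, exists_prop]
      constructor
      · rintro ⟨E, _, hωA, hωc⟩
        exact ⟨hωA, hωc.1⟩
      · rintro ⟨hωA, hωD⟩
        refine ⟨Finset.univ.filter (fun k => T k ω ≤ s), Finset.mem_powerset.mpr ?_,
          hωA, hωD, ?_⟩
        · intro k hk
          simp only [Finset.mem_filter, Finset.mem_univ, true_and] at hk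
          exact (hωD k).mp (le_trans hk hst)
        · intro k
          simp
    have hdisj2 : Set.Pairwise ↑(D.powerset)
        (Function.onFun Disjoint (fun E => A ∩ cell D E)) := by
      intro E1 _ E2 _ hne
      rw [Function.onFun, Set.disjoint_left]
      rintro ω ⟨_, _, h1⟩ ⟨_, _, h2⟩
      exact hne (Finset.ext fun k => (h1 k).symm.trans (h2 k))
    have hbi := integral_biUnion_finset (μ := μ) (f := Mproc n m T I₀ s) D.powerset
      (fun E _ => hA.inter (hcell_meas D E)) hdisj2 (fun E _ => hMs_int.integrableOn)
    rw [hU2] at hbi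
    exact hbi
  -- evaluation on cells
  have hval1 : ∀ (D : Finset (Fin (n + m))), ∀ E ∈ D.powerset,
      ∫ ω in A ∩ cell D E, Mproc n m T I₀ s ω ∂μ = vals E * (μ (A ∩ cell D E)).toReal := by
    intro D E _
    have hEq : Set.EqOn (Mproc n m T I₀ s) (fun _ => vals E) (A ∩ cell D E) := by
      intro ω hω
      have hs' : ∀ k, T k ω ≤ s ↔ k ∈ E := hω.2.2
      show Mproc n m T I₀ s ω = vals E
      rw [Mproc, vcount_eq hs', vnc_eq hs']
    rw [setIntegral_congr_fun (hA.inter (hcell_meas D E)) hEq, setIntegral_const,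
      smul_eq_mul, mul_comm]
    rfl
  have hval2 : ∀ D : Finset (Fin (n + m)),
      ∫ ω in A ∩ OmD D, gfun ω ∂μ = valg D * (μ (A ∩ OmD D)).toReal := by
    intro D
    have hEq : Set.EqOn gfun (fun _ => valg D) (A ∩ OmD D) := by
      intro ω hω
      have ht' : ∀ k, T k ω ≤ t ↔ k ∈ D := hω.2
      show gfun ω = valg D
      rw [hgfun]
      simp only
      rw [Mproc, vcount_eq ht', vnc_eq ht']
    rw [setIntegral_congr_fun (hA.inter (hOmD_meas D)) hEq, setIntegral_const,
      smul_eq_mul, mul_comm]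
    rfl
  calc ∫ ω in A, Mproc n m T I₀ s ω ∂μ
      = ∑ D ∈ (Finset.univ : Finset (Fin (n + m))).powerset,
          ∫ ω in A ∩ OmD D, Mproc n m T I₀ s ω ∂μ := hsplit1 _ hMs_int
    _ = ∑ D ∈ (Finset.univ : Finset (Fin (n + m))).powerset,
          ∑ E ∈ D.powerset, vals E * (μ (A ∩ cell D E)).toReal := by
        refine Finset.sum_congr rfl fun D _ => ?_
        rw [hsplit2 D]
        exact Finset.sum_congr rfl fun E hE => hval1 D E hE
    _ ≤ ∑ D ∈ (Finset.univ : Finset (Fin (n + m))).powerset,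
          valg D * (μ (A ∩ OmD D)).toReal :=
        Finset.sum_le_sum fun D _ => hperD D
    _ = ∑ D ∈ (Finset.univ : Finset (Fin (n + m))).powerset,
          ∫ ω in A ∩ OmD D, gfun ω ∂μ :=
        Finset.sum_congr rfl fun D _ => (hval2 D).symm
    _ = ∫ ω in A, gfun ω ∂μ := (hsplit1 _ hg_int).symm

end Key





section CondexpHelp

lemma condexp_chain {Ω : Type*} {F G m0 : MeasurableSpace Ω} {μ : Measure Ω}
    [IsFiniteMeasure μ] (hFG : F ≤ G) (hG : G ≤ m0)
    {f g : Ω → ℝ} (hf : Integrable f μ) (hg : Integrable g μ)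
    (hgF : StronglyMeasurable[F] g)
    (h : ∀ A : Set Ω, MeasurableSet[G] A → ∫ ω in A, f ω ∂μ ≤ ∫ ω in A, g ω ∂μ) :
    μ[f|F] ≤ᵐ[μ] g := by
  have hF : F ≤ m0 := hFG.trans hG
  haveI : SigmaFinite (μ.trim hG) := inferInstance
  haveI : SigmaFinite (μ.trim hF) := inferInstance
  have hgG : StronglyMeasurable[G] g := hgF.mono hFG
  -- first : μ[f|G] ≤ᵐ g
  have h2 : μ[f|G] ≤ᵐ[μ] g := by
    set d : Ω → ℝ := fun ω => g ω - (μ[f|G]) ω with hd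
    have hd_sm : StronglyMeasurable[G] d := hgG.sub stronglyMeasurable_condExp
    have hd_int : Integrable d μ := hg.sub integrable_condExp
    have hd_set : ∀ A : Set Ω, MeasurableSet[G] A → 0 ≤ ∫ ω in A, d ω ∂μ := by
      intro A hA
      have heq : ∫ ω in A, d ω ∂μ
          = (∫ ω in A, g ω ∂μ) - ∫ ω in A, (μ[f|G]) ω ∂μ :=
        integral_sub hg.integrableOn integrable_condExp.integrableOn
      rw [heq, setIntegral_condExp hG hf hA]
      linarith [h A hA]
    have h0 : (0 : Ω → ℝ) ≤ᵐ[μ.trim hG] d := by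
      refine ae_nonneg_of_forall_setIntegral_nonneg (hd_int.trim hG hd_sm) ?_
      intro A hA _
      rw [← setIntegral_trim hG hd_sm hA]
      exact hd_set A hA
    have h0' : ∀ᵐ ω ∂μ, (0 : Ω → ℝ) ω ≤ d ω := ae_of_ae_trim hG h0
    filter_upwards [h0'] with ω hω
    simp only [hd, Pi.zero_apply] at hω
    linarith
  have h1 : μ[f|F] =ᵐ[μ] μ[μ[f|G]|F] := (condExp_condExp_of_le hFG hG).symm
  have h3 : μ[μ[f|G]|F] ≤ᵐ[μ] μ[g|F] := condExp_mono integrable_condExp hg h2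
  have h4 : μ[g|F] = g := condExp_of_stronglyMeasurable hF hgF hg
  rw [h4] at h3
  filter_upwards [h1, h3] with ω h1ω h3ω
  rw [h1ω]
  exact h3ω

end CondexpHelp

section Filtr

variable {Ω : Type*} [MeasurableSpace Ω] {μ : Measure Ω} {n m : ℕ}
  {T : Fin (n + m) → Ω → ℝ} {I₀ : Set (Fin n)}

lemma backFiltration_le (hmeas : ∀ k, Measurable (T k)) (t : ℝ) :
    backFiltration n m T I₀ t ≤ ‹MeasurableSpace Ω› := by
  rw [backFiltration]
  refine iSup₂_le fun u _ => ?_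
  rintro _ ⟨Bset, -, rfl⟩
  have htrip : Measurable (fun ω =>
      (Vcount n m T I₀ ω u, Scount n m T I₀ ω u, VncCount n m T ω u)) :=
    (meas_vcount hmeas u).prodMk ((meas_scount hmeas u).prodMk (meas_vnc hmeas u))
  exact htrip MeasurableSet.of_discrete

lemma backFiltration_le_comapPhi (hrange : ∀ k, ∀ ω, T k ω ∈ Set.Ioo (0 : ℝ) 1)
    {t : ℝ} (ht0 : 0 ≤ t) :
    backFiltration n m T I₀ t
      ≤ MeasurableSpace.comap (PhiMap n m T t) inferInstance := by
  rw [backFiltration]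
  refine iSup₂_le fun u hu => ?_
  rintro _ ⟨Bset, -, rfl⟩
  refine ⟨(fun x => (HV n m I₀ u x, HS n m I₀ u x, HC n m u x)) ⁻¹' Bset, ?_, ?_⟩
  · exact ((meas_HV u).prodMk ((meas_HS u).prodMk (meas_HC u))) MeasurableSet.of_discrete
  · have hfun : (fun x => (HV n m I₀ u x, HS n m I₀ u x, HC n m u x)) ∘ (PhiMap n m T t)
        = fun ω => (Vcount n m T I₀ ω u, Scount n m T I₀ ω u, VncCount n m T ω u) := by
      funext ω
      show (HV n m I₀ u (PhiMap n m T t ω), HS n m I₀ u (PhiMap n m T t ω),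
          HC n m u (PhiMap n m T t ω)) = _
      rw [← count_comp_V hrange ht0 hu.1 ω, ← count_comp_S hrange ht0 hu.1 ω,
        ← count_comp_C hrange ht0 hu.1 ω]
    rw [← Set.preimage_comp, hfun]

lemma comap_triple_le_backFiltration {t : ℝ} (ht1 : t ≤ 1) :
    MeasurableSpace.comap
        (fun ω => (Vcount n m T I₀ ω t, Scount n m T I₀ ω t, VncCount n m T ω t))
        (⊤ : MeasurableSpace (ℕ × ℕ × ℕ))
      ≤ backFiltration n m T I₀ t := by
  rw [backFiltration]
  exact le_biSup
    (fun u => MeasurableSpace.comap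
      (fun ω => (Vcount n m T I₀ ω u, Scount n m T I₀ ω u, VncCount n m T ω u))
      (⊤ : MeasurableSpace (ℕ × ℕ × ℕ)))
    (Set.mem_Icc.mpr ⟨le_refl t, ht1⟩)

lemma gfun_measurable_back {t p : ℝ} (ht1 : t ≤ 1) :
    Measurable[backFiltration n m T I₀ t]
      (fun ω => Mproc n m T I₀ t ω * (1 - (1 - p) ^ (VncCount n m T ω t + 1))) := by
  have hcomp : (fun ω => Mproc n m T I₀ t ω * (1 - (1 - p) ^ (VncCount n m T ω t + 1)))
      = (fun x : ℕ × ℕ × ℕ => (x.1 : ℝ) * (1 + (m : ℝ)) / (1 + (x.2.2 : ℝ))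
          * (1 - (1 - p) ^ (x.2.2 + 1)))
        ∘ (fun ω => (Vcount n m T I₀ ω t, Scount n m T I₀ ω t, VncCount n m T ω t)) := rfl
  rw [hcomp]
  intro U hU
  exact comap_triple_le_backFiltration ht1 _
    ⟨(fun x : ℕ × ℕ × ℕ => (x.1 : ℝ) * (1 + (m : ℝ)) / (1 + (x.2.2 : ℝ))
        * (1 - (1 - p) ^ (x.2.2 + 1))) ⁻¹' U, trivial, (Set.preimage_comp).symm⟩

end Filtr


/-- under uniform stochastic dominance of the true nulls over the negative
controls and mutual independence (statistics in `(0,1)` with continuous CDFs), the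
process `M(t) = V(t)(1+m)/(1+V_nc(t))` is a backward super-martingale: for all
`0 ≤ s ≤ t ≤ 1` and any `0 ≤ p_t^s ≤ 1` with
`max_{i ∈ I₀} F_i(s)/F_i(t) ≤ p_t^s ≤ min_j F_j(s)/F_j(t)`, almost surely
`E[M(s) | F_t] ≤ M(t)(1-(1-p_t^s)^{V_nc(t)+1}) ≤ M(t)`. -/
theorem stmt10 {Ω : Type*} [MeasurableSpace Ω] (μ : Measure Ω) [IsProbabilityMeasure μ]
    (n m : ℕ) (T : Fin (n + m) → Ω → ℝ) (hmeas : ∀ k, Measurable (T k))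
    (hcont : ∀ k, ContinuousCDF μ (T k))
    (hrange : ∀ k, ∀ ω, T k ω ∈ Set.Ioo (0 : ℝ) 1)
    (I₀ : Set (Fin n))
    (hdom : ∀ i ∈ I₀, ∀ j : Fin m,
      UnifStochLarger μ (T (Fin.castAdd m i)) (T (Fin.natAdd n j)))
    (hindep : iIndepFun (m := fun _ : Fin (n + m) => (inferInstance : MeasurableSpace ℝ)) T μ) :
    ∀ s t : ℝ, 0 ≤ s → s ≤ t → t ≤ 1 →
      ∀ p : ℝ, 0 ≤ p → p ≤ 1 →
        (∀ i ∈ I₀, cdf' μ (T (Fin.castAdd m i)) s ≤ p * cdf' μ (T (Fin.castAdd m i)) t) →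
        (∀ j : Fin m, p * cdf' μ (T (Fin.natAdd n j)) t ≤ cdf' μ (T (Fin.natAdd n j)) s) →
        ∀ᵐ ω ∂μ,
          (μ[Mproc n m T I₀ s | backFiltration n m T I₀ t]) ω ≤
              Mproc n m T I₀ t ω * (1 - (1 - p) ^ (VncCount n m T ω t + 1)) ∧
            Mproc n m T I₀ t ω * (1 - (1 - p) ^ (VncCount n m T ω t + 1)) ≤
              Mproc n m T I₀ t ω := by
  intro s t hs0 hst ht1 p hp0 hp1 hnull hctrl
  have ht0 : 0 ≤ t := le_trans hs0 hst
  set gfun : Ω → ℝ :=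
    fun ω => Mproc n m T I₀ t ω * (1 - (1 - p) ^ (VncCount n m T ω t + 1)) with hgfun
  have hfac1 : ∀ ω : Ω, 0 ≤ (1 - p) ^ (VncCount n m T ω t + 1) :=
    fun ω => pow_nonneg (by linarith) _
  have hfac2 : ∀ ω : Ω, (1 - p) ^ (VncCount n m T ω t + 1) ≤ 1 :=
    fun ω => pow_le_one₀ (by linarith) (by linarith)
  have hg_meas : Measurable gfun := by
    apply (meas_Mproc hmeas t).mul
    have : (fun ω => 1 - (1 - p) ^ (VncCount n m T ω t + 1))
        = (fun c : ℕ => 1 - (1 - p) ^ (c + 1)) ∘ (fun ω => VncCount n m T ω t) := rfl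
    rw [this]
    exact measurable_from_top.comp (meas_vnc hmeas t)
  have hg_bound : ∀ ω, |gfun ω| ≤ (n : ℝ) * (1 + m) := by
    intro ω
    have h0 : 0 ≤ gfun ω := mul_nonneg (Mproc_nonneg t ω) (by linarith [hfac2 ω])
    rw [abs_of_nonneg h0, hgfun]
    calc Mproc n m T I₀ t ω * (1 - (1 - p) ^ (VncCount n m T ω t + 1))
        ≤ Mproc n m T I₀ t ω :=
          mul_le_of_le_one_right (Mproc_nonneg t ω) (by linarith [hfac1 ω])
      _ ≤ (n : ℝ) * (1 + m) := Mproc_le t ω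
  have hg_int : Integrable gfun μ := integrable_of_bound hg_meas _ hg_bound
  have hgF : StronglyMeasurable[backFiltration n m T I₀ t] gfun :=
    Measurable.stronglyMeasurable (gfun_measurable_back ht1)
  have hG_le : MeasurableSpace.comap (PhiMap n m T t) inferInstance
      ≤ ‹MeasurableSpace Ω› := by
    rintro _ ⟨B, hB, rfl⟩
    exact meas_PhiMap hmeas t hB
  have hkey : ∀ A : Set Ω,
      MeasurableSet[MeasurableSpace.comap (PhiMap n m T t) inferInstance] A →
      ∫ ω in A, Mproc n m T I₀ s ω ∂μ ≤ ∫ ω in A, gfun ω ∂μ := by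
    rintro _ ⟨B, hB, rfl⟩
    exact key_setIntegral hmeas hrange hindep hs0 hst hp0 hp1 hnull hctrl B hB
  have hmain : μ[Mproc n m T I₀ s|backFiltration n m T I₀ t] ≤ᵐ[μ] gfun :=
    condexp_chain (backFiltration_le_comapPhi hrange ht0) hG_le
      (integrable_Mproc hmeas s) hg_int hgF hkey
  filter_upwards [hmain] with ω hω
  exact ⟨hω, mul_le_of_le_one_right (Mproc_nonneg t ω) (by linarith [hfac1 ω])⟩
end

section
/- Let T denote the vector of all n + m test statistics (without ties) and let f be a real-valued function of T such that (1) f(T) = f(g(T)) for every strictly increasing function g : R → R applied componentwise, and (2) f(T) = f(T_P) for every permutation P of the coordinates that does not exchange investigated statistics (indices 1,...,n) with negative control statistics (indices n+1,...,n+m). Then f(T) is a function of the multiset of RANC p-values {p_i : 1 ≤ i ≤ n}. -/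
/-- Auxiliary: a strictly monotone function on a finite set of reals extends to a
strictly monotone function on all of `ℝ`. -/
lemma ranc_extend_smOn : ∀ (A : Finset ℝ) (φ : ℝ → ℝ), StrictMonoOn φ ↑A →
    ∃ g : ℝ → ℝ, StrictMono g ∧ ∀ a ∈ A, g a = φ a := by
  intro A
  induction A using Finset.strongInduction with
  | _ A ih =>
    intro φ h
    rcases A.eq_empty_or_nonempty with rfl | hA
    · exact ⟨id, strictMono_id, by simp⟩
    · obtain ⟨a, ha⟩ : ∃ a, a = A.max' hA := ⟨_, rfl⟩
      have haA : a ∈ A := ha ▸ A.max'_mem hA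
      rcases (A.erase a).eq_empty_or_nonempty with he | hne
      · refine ⟨fun t => t - a + φ a, ?_, ?_⟩
        · intro t₁ t₂ h12; dsimp; linarith
        · intro b hb
          have hba : b = a := by
            by_contra hba
            have : b ∈ A.erase a := Finset.mem_erase.mpr ⟨hba, hb⟩
            simp [he] at this
          simp [hba]
      · obtain ⟨b, hb⟩ : ∃ b, b = (A.erase a).max' hne := ⟨_, rfl⟩
        have hbs : b ∈ A.erase a := hb ▸ (A.erase a).max'_mem hne
        have hbA : b ∈ A := Finset.mem_of_mem_erase hbs
        have hbne : b ≠ a := (Finset.mem_erase.mp hbs).1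
        have hba : b < a := lt_of_le_of_ne (ha ▸ A.le_max' b hbA) hbne
        have hsub : A.erase a ⊂ A := Finset.erase_ssubset haA
        have hmon : StrictMonoOn φ ↑(A.erase a) :=
          h.mono (Finset.coe_subset.mpr (Finset.erase_subset _ _))
        obtain ⟨g₀, hg₀m, hg₀⟩ := ih (A.erase a) hsub φ hmon
        have hφba : φ b < φ a := h hbA haA hba
        have hσ : 0 < (φ a - φ b) / (a - b) := div_pos (by linarith) (by linarith)
        have hg₀b : g₀ b = φ b := hg₀ b hbs
        refine ⟨fun t => if t ≤ b then g₀ t else φ b + (φ a - φ b) / (a - b) * (t - b),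
          ?_, ?_⟩
        · intro t₁ t₂ h12
          by_cases h1 : t₁ ≤ b <;> by_cases h2 : t₂ ≤ b <;>
            simp only [h1, h2, if_true, if_false]
          · exact hg₀m h12
          · have h3 : g₀ t₁ ≤ g₀ b := hg₀m.monotone h1
            have h4 : b < t₂ := lt_of_not_ge h2
            nlinarith
          · exact absurd (le_trans (le_of_lt h12) h2) h1
          · have h4 : b < t₁ := lt_of_not_ge h1
            have := mul_lt_mul_of_pos_left (show t₁ - b < t₂ - b by linarith) hσ
            linarith
        · intro c hc
          by_cases hca : c = a
          · have hcb' : ¬ c ≤ b := by rw [hca]; exact not_le.mpr hba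
            simp only [hcb', if_false]
            rw [hca]
            have hab : a - b ≠ 0 := by linarith
            rw [div_mul_cancel₀ _ hab]
            ring
          · have hcs : c ∈ A.erase a := Finset.mem_erase.mpr ⟨hca, hc⟩
            have hcb : c ≤ b := hb ▸ (A.erase a).le_max' c hcs
            simp only [hcb, if_true]
            exact hg₀ c hcs

/-- Auxiliary: vectors with the same strict order pattern differ by a strictly
monotone transformation. -/
lemma ranc_order_transfer {N : ℕ} (u v : Fin N → ℝ)
    (h : ∀ k l, u k < u l ↔ v k < v l) :
    ∃ g : ℝ → ℝ, StrictMono g ∧ ∀ k, g (u k) = v k := by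
  classical
  have heq : ∀ k l, u k = u l → v k = v l := by
    intro k l hkl
    have h1 : ¬ v k < v l := by rw [← h]; simp [hkl]
    have h2 : ¬ v l < v k := by rw [← h]; simp [hkl]
    exact le_antisymm (not_lt.mp h2) (not_lt.mp h1)
  set φ : ℝ → ℝ := fun t => if ht : ∃ k, u k = t then v ht.choose else t with hφ
  have hφval : ∀ k, φ (u k) = v k := by
    intro k
    have ht : ∃ l, u l = u k := ⟨k, rfl⟩
    simp only [hφ, dif_pos ht]
    exact heq _ _ ht.choose_spec
  have hmonOn : StrictMonoOn φ ↑(Finset.image u Finset.univ) := by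
    intro p hp q hq hpq
    simp only [Finset.coe_image, Finset.coe_univ, Set.image_univ, Set.mem_range] at hp hq
    obtain ⟨k, rfl⟩ := hp
    obtain ⟨l, rfl⟩ := hq
    rw [hφval k, hφval l]
    exact (h k l).mp hpq
  obtain ⟨g, hg, hga⟩ := ranc_extend_smOn _ φ hmonOn
  refine ⟨g, hg, fun k => ?_⟩
  rw [hga (u k) (Finset.mem_image_of_mem u (Finset.mem_univ k)), hφval]

/-- The RANC p-value of investigated hypothesis `i` for a (deterministic) vector of
statistics `x` (investigated: indices `Fin.castAdd m i`, negative controls: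
`Fin.natAdd n j`): `p_i = (1 + #{negative controls j : x_j ≤ x_i}) / (1 + m)`. -/
noncomputable def rancVec (n m : ℕ) (x : Fin (n + m) → ℝ) (i : Fin n) : ℝ :=
  ((1 : ℝ) +
      ({j : Fin m | x (Fin.natAdd n j) ≤ x (Fin.castAdd m i)} : Set (Fin m)).ncard) /
    (1 + (m : ℝ))

/-- The count of negative controls at most the `i`-th investigated statistic. -/
noncomputable def rancCnt (n m : ℕ) (x : Fin (n + m) → ℝ) (i : Fin n) : ℕ :=
  (Finset.univ.filter fun j : Fin m =>
    x (Fin.natAdd n j) ≤ x (Fin.castAdd m i)).card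

lemma rancVec_eq_cnt (n m : ℕ) (x : Fin (n + m) → ℝ) (i : Fin n) :
    rancVec n m x i = (1 + (rancCnt n m x i : ℝ)) / (1 + (m : ℝ)) := by
  unfold rancVec rancCnt
  congr 2
  rw [Set.ncard_eq_toFinset_card', Set.toFinset_setOf]

lemma ranc_card_filter_comp_perm {m : ℕ} (τ : Equiv.Perm (Fin m)) (P : Fin m → Prop)
    [DecidablePred P] :
    (Finset.univ.filter fun j => P (τ j)).card = (Finset.univ.filter P).card := by
  apply Finset.card_bij (fun j _ => τ j)
  · intro j hj
    simp only [Finset.mem_filter, Finset.mem_univ, true_and] at hj ⊢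
    exact hj
  · intro j₁ _ j₂ _ h12
    exact τ.injective h12
  · intro b hb
    refine ⟨τ.symm b, ?_, by simp⟩
    simp only [Finset.mem_filter, Finset.mem_univ, true_and] at hb ⊢
    simpa using hb

/-- The key property of counts for within-block sorted vectors. -/
lemma ranc_cross {n m : ℕ} (x : Fin (n + m) → ℝ)
    (hw : StrictMono fun j : Fin m => x (Fin.natAdd n j)) (i : Fin n) (j : Fin m) :
    x (Fin.natAdd n j) ≤ x (Fin.castAdd m i) ↔ (j : ℕ) < rancCnt n m x i := by
  classical
  have hdown : ∀ j' j'' : Fin m, j' ≤ j'' →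
      x (Fin.natAdd n j'') ≤ x (Fin.castAdd m i) →
      x (Fin.natAdd n j') ≤ x (Fin.castAdd m i) := by
    intro j' j'' hle hmem
    exact le_trans (hw.monotone hle) hmem
  unfold rancCnt
  constructor
  · intro hle
    have hsub : Finset.Iic j ⊆ Finset.univ.filter
        (fun j' : Fin m => x (Fin.natAdd n j') ≤ x (Fin.castAdd m i)) := by
      intro j' hj'
      simp only [Finset.mem_filter, Finset.mem_univ, true_and]
      exact hdown j' j (Finset.mem_Iic.mp hj') hle
    have := Finset.card_le_card hsub
    rw [Fin.card_Iic] at this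
    exact lt_of_lt_of_le (Nat.lt_succ_self _) this
  · intro hlt
    by_contra hnot
    have hsub : Finset.univ.filter
        (fun j' : Fin m => x (Fin.natAdd n j') ≤ x (Fin.castAdd m i)) ⊆ Finset.Iio j := by
      intro j'' hj''
      simp only [Finset.mem_filter, Finset.mem_univ, true_and] at hj''
      rw [Finset.mem_Iio]
      by_contra hge
      exact hnot (hdown j j'' (not_lt.mp hge) hj'')
    have := Finset.card_le_card hsub
    rw [Fin.card_Iio] at this
    exact absurd hlt (not_lt.mpr this)

/-- Equal multisets of values of monotone `ℕ`-valued tuples force equality. -/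
lemma ranc_mono_multiset_eq {n : ℕ} (c d : Fin n → ℕ) (hc : Monotone c) (hd : Monotone d)
    (h : Multiset.map c (Finset.univ : Finset (Fin n)).val =
      Multiset.map d (Finset.univ : Finset (Fin n)).val) : c = d := by
  have key : ∀ e : Fin n → ℕ,
      Multiset.map e (Finset.univ : Finset (Fin n)).val = ↑(List.ofFn e) := by
    intro e
    simp [Finset.univ, Fintype.elems, List.ofFn_eq_map]
    try rfl
  rw [key c, key d, Multiset.coe_eq_coe] at h
  exact List.ofFn_inj.mp (List.Perm.eq_of_sortedLE
    (List.sortedLE_ofFn_iff.mpr hc) (List.sortedLE_ofFn_iff.mpr hd) h)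

/-- Sorting within blocks: a group-preserving permutation making both blocks
strictly monotone while preserving the multiset of counts. -/
lemma ranc_sort_reduce (n m : ℕ) (x : Fin (n + m) → ℝ) (hx : Function.Injective x) :
    ∃ x' : Fin (n + m) → ℝ, ∃ e : Equiv.Perm (Fin (n + m)),
      (∀ k : Fin (n + m), (k : ℕ) < n ↔ ((e k : Fin (n + m)) : ℕ) < n) ∧
      x' = (fun k => x (e k)) ∧ Function.Injective x' ∧
      StrictMono (fun i : Fin n => x' (Fin.castAdd m i)) ∧
      StrictMono (fun j : Fin m => x' (Fin.natAdd n j)) ∧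
      Multiset.map (rancCnt n m x') (Finset.univ : Finset (Fin n)).val =
        Multiset.map (rancCnt n m x) (Finset.univ : Finset (Fin n)).val := by
  classical
  set u : Fin n → ℝ := fun i => x (Fin.castAdd m i) with hu
  set w : Fin m → ℝ := fun j => x (Fin.natAdd n j) with hwdef
  set σ : Equiv.Perm (Fin n) := Tuple.sort u with hσ
  set τ : Equiv.Perm (Fin m) := Tuple.sort w with hτ
  set e : Equiv.Perm (Fin (n + m)) :=
    finSumFinEquiv.symm.trans ((Equiv.sumCongr σ τ).trans finSumFinEquiv) with he
  have hecast : ∀ i : Fin n, e (Fin.castAdd m i) = Fin.castAdd m (σ i) := by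
    intro i; simp [he]
  have henat : ∀ j : Fin m, e (Fin.natAdd n j) = Fin.natAdd n (τ j) := by
    intro j; simp [he]
  refine ⟨fun k => x (e k), e, ?_, rfl, hx.comp e.injective, ?_, ?_, ?_⟩
  · intro k
    induction k using Fin.addCases with
    | left i => simp [hecast i, Fin.is_lt]
    | right j => simp [henat j, Fin.coe_natAdd]
  · have hmono : Monotone (u ∘ σ) := Tuple.monotone_sort u
    have heqf : (fun i : Fin n => x (e (Fin.castAdd m i))) = u ∘ σ := by
      funext i; rw [hecast i]; rfl
    rw [heqf]
    refine hmono.strictMono_of_injective ?_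
    exact (hx.comp (Fin.castAdd_injective n m)).comp σ.injective
  · have hmono : Monotone (w ∘ τ) := Tuple.monotone_sort w
    have heqf : (fun j : Fin m => x (e (Fin.natAdd n j))) = w ∘ τ := by
      funext j; rw [henat j]; rfl
    rw [heqf]
    refine hmono.strictMono_of_injective ?_
    refine (hx.comp ?_).comp τ.injective
    intro a b hab
    have := congrArg Fin.val hab
    simp only [Fin.coe_natAdd] at this
    exact Fin.ext (by omega)
  · have hcnt : ∀ i : Fin n,
        rancCnt n m (fun k => x (e k)) i = rancCnt n m x (σ i) := by
      intro i
      unfold rancCnt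
      have : ∀ j : Fin m, x (e (Fin.natAdd n j)) = w (τ j) := by
        intro j; rw [henat j]
      calc (Finset.univ.filter fun j : Fin m =>
              x (e (Fin.natAdd n j)) ≤ x (e (Fin.castAdd m i))).card
          = (Finset.univ.filter fun j : Fin m => w (τ j) ≤ u (σ i)).card := by
            congr 1
            apply Finset.filter_congr
            intro j _
            rw [this j, hecast i]
        _ = (Finset.univ.filter fun j : Fin m => w j ≤ u (σ i)).card :=
            ranc_card_filter_comp_perm τ (fun j => w j ≤ u (σ i))
        _ = _ := rfl
    have hστ : Multiset.map (⇑σ) (Finset.univ : Finset (Fin n)).val =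
        (Finset.univ : Finset (Fin n)).val := by
      conv_rhs => rw [← Finset.map_univ_equiv σ]
      rw [Finset.map_val]
      rfl
    calc Multiset.map (rancCnt n m fun k => x (e k)) Finset.univ.val
        = Multiset.map (fun i => rancCnt n m x (σ i)) Finset.univ.val := by
          congr 1; funext i; exact hcnt i
      _ = Multiset.map (rancCnt n m x) (Multiset.map (⇑σ) Finset.univ.val) := by
          rw [Multiset.map_map]; rfl
      _ = _ := by rw [hστ]

/-- if `f` is invariant under componentwise strictly increasing
transformations and under permutations that do not exchange investigated statistics with
negative control statistics, then `f(T)` is a function of the multiset of RANC p-values: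
any two tie-free vectors of statistics with the same multiset of RANC p-values give the
same value of `f`. -/
theorem stmt11 (n m : ℕ) (f : (Fin (n + m) → ℝ) → ℝ)
    (hmono : ∀ (x : Fin (n + m) → ℝ) (g : ℝ → ℝ), StrictMono g →
      f (fun k => g (x k)) = f x)
    (hperm : ∀ (x : Fin (n + m) → ℝ) (e : Equiv.Perm (Fin (n + m))),
      (∀ k : Fin (n + m), (k : ℕ) < n ↔ ((e k : Fin (n + m)) : ℕ) < n) →
      f (fun k => x (e k)) = f x) :
    ∀ x y : Fin (n + m) → ℝ, Function.Injective x → Function.Injective y →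
      (Multiset.map (fun i : Fin n => rancVec n m x i) (Finset.univ : Finset (Fin n)).val =
        Multiset.map (fun i : Fin n => rancVec n m y i) (Finset.univ : Finset (Fin n)).val) →
      f x = f y := by
  intro x y hx hy hmul
  -- pass from p-values to counts
  have hmaph : ∀ z : Fin (n + m) → ℝ,
      Multiset.map (fun i : Fin n => rancVec n m z i) Finset.univ.val =
        Multiset.map (fun t : ℕ => (1 + (t : ℝ)) / (1 + (m : ℝ)))
          (Multiset.map (rancCnt n m z) Finset.univ.val) := by
    intro z
    rw [Multiset.map_map]
    congr 1
    funext i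
    exact rancVec_eq_cnt n m z i
  have hinj : Function.Injective (fun t : ℕ => (1 + (t : ℝ)) / (1 + (m : ℝ))) := by
    intro t₁ t₂ h12
    have hm : (0 : ℝ) < 1 + (m : ℝ) := by positivity
    field_simp at h12
    exact_mod_cast add_left_cancel h12
  have hcntmul : Multiset.map (rancCnt n m x) Finset.univ.val =
      Multiset.map (rancCnt n m y) Finset.univ.val := by
    apply Multiset.map_injective hinj
    rw [← hmaph x, ← hmaph y]
    exact hmul
  -- sort both vectors within blocks
  obtain ⟨x', ex, hgx, hx'e, hx'inj, hxu, hxw, hxc⟩ := ranc_sort_reduce n m x hx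
  obtain ⟨y', ey, hgy, hy'e, hy'inj, hyu, hyw, hyc⟩ := ranc_sort_reduce n m y hy
  -- the sorted counts are monotone, hence equal
  have hcmono : ∀ (z : Fin (n + m) → ℝ),
      StrictMono (fun i : Fin n => z (Fin.castAdd m i)) → Monotone (rancCnt n m z) := by
    intro z hz i i' hle
    apply Finset.card_le_card
    apply Finset.monotone_filter_right
    intro j _ hj
    exact le_trans hj (hz.monotone hle)
  have hceq : rancCnt n m x' = rancCnt n m y' := by
    apply ranc_mono_multiset_eq _ _ (hcmono x' hxu) (hcmono y' hyu)
    rw [hxc, hyc, hcntmul]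
  -- same order pattern
  have hne : ∀ (z : Fin (n + m) → ℝ), Function.Injective z →
      ∀ (i : Fin n) (j : Fin m), z (Fin.natAdd n j) ≠ z (Fin.castAdd m i) := by
    intro z hz i j hcontra
    have := hz hcontra
    have h1 : ((Fin.natAdd n j : Fin (n + m)) : ℕ) = n + (j : ℕ) := rfl
    have h2 : ((Fin.castAdd m i : Fin (n + m)) : ℕ) = (i : ℕ) := rfl
    have : ((Fin.natAdd n j : Fin (n + m)) : ℕ) = ((Fin.castAdd m i : Fin (n + m)) : ℕ) := by
      rw [this]
    rw [h1, h2] at this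
    have := i.is_lt
    omega
  have hpattern : ∀ k l, x' k < x' l ↔ y' k < y' l := by
    have cross_x : ∀ (i : Fin n) (j : Fin m),
        x' (Fin.natAdd n j) ≤ x' (Fin.castAdd m i) ↔ (j : ℕ) < rancCnt n m x' i :=
      fun i j => ranc_cross x' hxw i j
    have cross_y : ∀ (i : Fin n) (j : Fin m),
        y' (Fin.natAdd n j) ≤ y' (Fin.castAdd m i) ↔ (j : ℕ) < rancCnt n m y' i :=
      fun i j => ranc_cross y' hyw i j
    intro k l
    induction k using Fin.addCases with
    | left i =>
      induction l using Fin.addCases with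
      | left i' =>
        rw [hxu.lt_iff_lt, hyu.lt_iff_lt]
      | right j =>
        rw [lt_iff_not_ge, lt_iff_not_ge, ← not_iff_not] at *
        push_neg
        constructor
        · intro h1
          exact (cross_y i j).mpr (hceq ▸ (cross_x i j).mp h1)
        · intro h1
          exact (cross_x i j).mpr (hceq ▸ (cross_y i j).mp h1)
    | right j =>
      induction l using Fin.addCases with
      | left i =>
        have hx1 : x' (Fin.natAdd n j) < x' (Fin.castAdd m i) ↔
            x' (Fin.natAdd n j) ≤ x' (Fin.castAdd m i) :=
          ⟨le_of_lt, fun h1 => lt_of_le_of_ne h1 (hne x' hx'inj i j)⟩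
        have hy1 : y' (Fin.natAdd n j) < y' (Fin.castAdd m i) ↔
            y' (Fin.natAdd n j) ≤ y' (Fin.castAdd m i) :=
          ⟨le_of_lt, fun h1 => lt_of_le_of_ne h1 (hne y' hy'inj i j)⟩
        rw [hx1, hy1, cross_x i j, cross_y i j, hceq]
      | right j' =>
        rw [hxw.lt_iff_lt, hyw.lt_iff_lt]
  obtain ⟨g, hg, hgval⟩ := ranc_order_transfer x' y' hpattern
  have e1 : f x' = f x := hx'e ▸ hperm x ex hgx
  have e2 : f y' = f y := hy'e ▸ hperm y ey hgy
  have e3 : f (fun k => g (x' k)) = f x' := hmono x' g hg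
  have e4 : (fun k => g (x' k)) = y' := funext hgval
  rw [← e1, ← e2, ← e3, e4]
end

section
/- Let R_λ(t) = F_0(t) − λF(t) with minimizer τ*_λ, where F_0 and F have density functions f_0 and f. Assume f(τ*_λ) > 0, f_0(τ*_λ) > 0, f' and f_0' exist at τ*_λ, and (f_0/f)'(τ*_λ) > 0. Then there exist constants C' > 0 and D' > 0 such that R_λ(τ*_λ) ≤ R_λ(t) − C'(t − τ*_λ)^2 for every t with |t − τ*_λ| ≤ D'. -/
/-- let `R_λ(t) = F₀(t) - λF(t)` with minimizer `τ*`, where the CDFs `F₀`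
and `F` have densities `f₀` and `f`. If `f(τ*) > 0`, `f₀(τ*) > 0`, `f'` and `f₀'` exist
at `τ*`, and `(f₀/f)'(τ*) > 0`, then there are constants `C' > 0` and `D' > 0` such that
`R_λ(τ*) ≤ R_λ(t) - C'(t - τ*)²` whenever `|t - τ*| ≤ D'`. -/
theorem stmt13 (F F₀ f f₀ : ℝ → ℝ) (lam : ℝ) (hlam : 0 < lam)
    (hF : ∀ t : ℝ, HasDerivAt F (f t) t)
    (hF₀ : ∀ t : ℝ, HasDerivAt F₀ (f₀ t) t)
    (τstar : ℝ)
    (hmin : ∀ t : ℝ, F₀ τstar - lam * F τstar ≤ F₀ t - lam * F t)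
    (hfpos : 0 < f τstar) (hf₀pos : 0 < f₀ τstar)
    (f' f₀' : ℝ)
    (hf' : HasDerivAt f f' τstar) (hf₀' : HasDerivAt f₀ f₀' τstar)
    (r : ℝ) (hr : HasDerivAt (fun t => f₀ t / f t) r τstar) (hrpos : 0 < r) :
    ∃ C' > (0 : ℝ), ∃ D' > (0 : ℝ), ∀ t : ℝ, |t - τstar| ≤ D' →
      F₀ τstar - lam * F τstar ≤ (F₀ t - lam * F t) - C' * (t - τstar) ^ 2 := by
  set R : ℝ → ℝ := fun t => F₀ t - lam * F t with hRdef
  set R' : ℝ → ℝ := fun t => f₀ t - lam * f t with hR'def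
  have hR : ∀ t, HasDerivAt R (R' t) t := fun t => (hF₀ t).sub ((hF t).const_mul lam)
  -- derivative at the minimizer vanishes
  have hmin' : IsLocalMin R τstar := by
    apply IsMinOn.isLocalMin (s := Set.univ)
    · intro t _; exact hmin t
    · exact Filter.univ_mem
  have hR'0 : R' τstar = 0 := hmin'.hasDerivAt_eq_zero (hR τstar)
  have hf₀eq : f₀ τstar = lam * f τstar := by
    have := hR'0; simp only [hR'def] at this; linarith
  -- compute r and get second derivative positivity
  have hr2 : HasDerivAt (fun t => f₀ t / f t)
      ((f₀' * f τstar - f₀ τstar * f') / (f τstar ^ 2)) τstar :=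
    hf₀'.div hf' (ne_of_gt hfpos)
  have hreq : r = (f₀' * f τstar - f₀ τstar * f') / (f τstar ^ 2) := hr.unique hr2
  set K : ℝ := f₀' - lam * f' with hKdef
  have hKpos : 0 < K := by
    have h1 : r * f τstar ^ 2 = f τstar * K := by
      rw [hreq, div_mul_cancel₀ _ (by positivity), hf₀eq]; ring
    have h2 : 0 < r * f τstar ^ 2 := by positivity
    nlinarith
  have hR'deriv : HasDerivAt R' K τstar := hf₀'.sub (hf'.const_mul lam)
  -- slope estimate near τstar
  have hslope : Filter.Tendsto (slope R' τstar) (nhdsWithin τstar {τstar}ᶜ) (nhds K) :=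
    hasDerivAt_iff_tendsto_slope.mp hR'deriv
  have hev : ∀ᶠ s in nhdsWithin τstar {τstar}ᶜ, K / 2 < slope R' τstar s :=
    hslope.eventually (eventually_gt_nhds (by linarith))
  obtain ⟨δ, hδpos, hδ⟩ := Metric.mem_nhdsWithin_iff.mp hev
  have hslope' : ∀ s : ℝ, s ≠ τstar → |s - τstar| < δ → K / 2 < R' s / (s - τstar) := by
    intro s hs hsd
    have h : K / 2 < slope R' τstar s :=
      hδ ⟨Metric.mem_ball.mpr (by rwa [Real.dist_eq]), hs⟩
    rwa [slope_def_field, hR'0, sub_zero] at h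
  -- the comparison function
  set g : ℝ → ℝ := fun s => R s - K / 8 * (s - τstar) ^ 2 with hgdef
  have hg : ∀ s, HasDerivAt g (R' s - K / 8 * (2 * (s - τstar))) s := by
    intro s
    have h1 : HasDerivAt (fun s : ℝ => (s - τstar) ^ 2) (2 * (s - τstar)) s := by
      simpa [Pi.pow_def] using (((hasDerivAt_id s).sub_const τstar).pow 2)
    exact (hR s).sub (h1.const_mul (K / 8))
  have hderivg : ∀ s, deriv g s = R' s - K / 8 * (2 * (s - τstar)) :=
    fun s => (hg s).deriv
  refine ⟨K / 8, by positivity, δ / 2, by positivity, fun t ht => ?_⟩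
  have hgoal : g τstar ≤ g t → F₀ τstar - lam * F τstar ≤ (F₀ t - lam * F t) - K / 8 * (t - τstar) ^ 2 := by
    intro h
    simpa [hgdef, hRdef] using h
  apply hgoal
  rcases lt_trichotomy t τstar with hlt | heq | hgt
  · -- t < τstar : g strictly antitone on [t, τstar]
    have hanti : StrictAntiOn g (Set.Icc t τstar) := by
      apply StrictAntiOn.mono (s := Set.Icc t τstar) ?_ le_rfl
      apply strictAntiOn_of_deriv_neg (convex_Icc t τstar)
        (fun s _ => (hg s).continuousAt.continuousWithinAt)
      intro s hs
      rw [interior_Icc] at hs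
      obtain ⟨hs1, hs2⟩ := hs
      have hsne : s ≠ τstar := ne_of_lt hs2
      have hsd : |s - τstar| < δ := by
        rw [abs_sub_lt_iff]
        constructor <;> [linarith; (rw [abs_le] at ht; linarith)]
      have hsl := hslope' s hsne hsd
      have hneg : s - τstar < 0 := by linarith
      have hR's : R' s < K / 2 * (s - τstar) := by
        rw [lt_div_iff_of_neg hneg] at hsl
        linarith
      rw [hderivg]
      nlinarith
    exact le_of_lt (hanti ⟨le_rfl, le_of_lt hlt⟩ ⟨le_of_lt hlt, le_rfl⟩ hlt)
  · simp [heq]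
  · -- τstar < t : g strictly monotone on [τstar, t]
    have hmono : StrictMonoOn g (Set.Icc τstar t) := by
      apply strictMonoOn_of_deriv_pos (convex_Icc τstar t)
        (fun s _ => (hg s).continuousAt.continuousWithinAt)
      intro s hs
      rw [interior_Icc] at hs
      obtain ⟨hs1, hs2⟩ := hs
      have hsne : s ≠ τstar := ne_of_gt hs1
      have hsd : |s - τstar| < δ := by
        rw [abs_sub_lt_iff]
        constructor <;> [(rw [abs_le] at ht; linarith); linarith]
      have hsl := hslope' s hsne hsd
      have hpos : 0 < s - τstar := by linarith
      have hR's : K / 2 * (s - τstar) < R' s := by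
        rw [lt_div_iff₀ hpos] at hsl
        linarith
      rw [hderivg]
      nlinarith
    exact le_of_lt (hmono ⟨le_rfl, le_of_lt hgt⟩ ⟨le_of_lt hgt, le_rfl⟩ hgt)
end

section
/- Consider i.i.d. samples of size n from a CDF F with density f and independent i.i.d. samples of size m from a CDF F_0 with density f_0. Suppose: f(τ*_λ), f_0(τ*_λ) > 0 with f', f_0' existing at τ*_λ; f ≤ f_max and f_0 ≤ f_{0,max} on a neighborhood |t − τ*_λ| ≤ D; (f_0/f)'(τ*_λ) > 0; and for every δ > 0 there exists ε_δ > 0 with F_0(t) − λF(t) > F_0(τ*_λ) − λF(τ*_λ) + ε_δ whenever |t − τ*_λ| > δ. Then the empirical minimizer τ̂ of F̂_{0,m}(t) − λF̂_n(t) converges to τ*_λ in probability as n, m → ∞. -/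
open MeasureTheory ProbabilityTheory Filter
open scoped ENNReal Topology

namespace Stmt14Aux

noncomputable def Fhat {Ω : Type*} (W : ℕ → Ω → ℝ) (m : ℕ) (ω : Ω) (t : ℝ) : ℝ :=
  (({j : ℕ | j < m ∧ W j ω ≤ t} : Set ℕ).ncard : ℝ) / m

lemma Fhat_eq_sum {Ω : Type*} (W : ℕ → Ω → ℝ) (m : ℕ) (ω : Ω) (t : ℝ) :
    Fhat W m ω t = (∑ j ∈ Finset.range m, if W j ω ≤ t then (1:ℝ) else 0) / m := by
  classical
  have h : ({j : ℕ | j < m ∧ W j ω ≤ t} : Set ℕ)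
      = ↑((Finset.range m).filter fun j => W j ω ≤ t) := by
    ext j; simp [Finset.mem_filter, Finset.mem_range]
  rw [Fhat, h, Set.ncard_coe_finset, Finset.card_filter]
  push_cast
  rfl

lemma Fhat_mono {Ω : Type*} (W : ℕ → Ω → ℝ) (m : ℕ) (ω : Ω) :
    Monotone (Fhat W m ω) := by
  intro s t hst
  rw [Fhat_eq_sum, Fhat_eq_sum]
  have hsum : (∑ j ∈ Finset.range m, if W j ω ≤ s then (1:ℝ) else 0)
      ≤ ∑ j ∈ Finset.range m, if W j ω ≤ t then (1:ℝ) else 0 := by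
    apply Finset.sum_le_sum
    intro j _
    split_ifs with h1 h2 <;> try norm_num
    · exact absurd (h1.trans hst) h2
  rcases Nat.eq_zero_or_pos m with hm | hm
  · simp [hm]
  · have hm' : (0:ℝ) ≤ m := by positivity
    gcongr

lemma Fhat_nonneg {Ω : Type*} (W : ℕ → Ω → ℝ) (m : ℕ) (ω : Ω) (t : ℝ) :
    0 ≤ Fhat W m ω t := by
  rw [Fhat]; positivity

lemma Fhat_le_one {Ω : Type*} (W : ℕ → Ω → ℝ) {m : ℕ} (hm : 1 ≤ m) (ω : Ω) (t : ℝ) :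
    Fhat W m ω t ≤ 1 := by
  rw [Fhat_eq_sum, div_le_one (by exact_mod_cast hm)]
  calc (∑ j ∈ Finset.range m, if W j ω ≤ t then (1:ℝ) else 0)
      ≤ ∑ j ∈ Finset.range m, (1:ℝ) := by
        apply Finset.sum_le_sum; intro j _; split_ifs <;> norm_num
    _ = m := by simp

lemma cheb {Ω : Type*} [MeasurableSpace Ω] (μ : Measure Ω) [IsProbabilityMeasure μ]
    (W : ℕ → Ω → ℝ) (hmeas : ∀ j, Measurable (W j))
    (hpair : ∀ i j, i ≠ j → IndepFun (W i) (W j) μ)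
    (G : ℝ → ℝ) (hG : ∀ j t, (μ {ω | W j ω ≤ t}).toReal = G t)
    (t η : ℝ) (hη : 0 < η) (m : ℕ) (hm : 1 ≤ m) :
    μ {ω | η ≤ |Fhat W m ω t - G t|} ≤ ENNReal.ofReal (1 / (m * η ^ 2)) := by
  classical
  have hm' : (0:ℝ) < m := by exact_mod_cast hm
  set s : ℕ → Set Ω := fun j => {ω | W j ω ≤ t} with hs
  have hsmeas : ∀ j, MeasurableSet (s j) := fun j => (hmeas j) measurableSet_Iic
  set Z : ℕ → Ω → ℝ := fun j => (s j).indicator (fun _ => (1:ℝ)) with hZ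
  have hZite : ∀ j ω, Z j ω = if W j ω ≤ t then (1:ℝ) else 0 := by
    intro j ω; simp [hZ, Set.indicator_apply, hs, Set.mem_setOf_eq]
  have hZmem : ∀ j, MemLp (Z j) 2 μ := fun j =>
    memLp_indicator_const 2 (hsmeas j) 1 (Or.inr (measure_ne_top μ _))
  have hZint : ∀ j, Integrable (Z j) μ := fun j => (hZmem j).integrable one_le_two
  have hZmean : ∀ j, μ[Z j] = G t := by
    intro j
    rw [hZ]
    rw [integral_indicator_const (1:ℝ) (hsmeas j)]
    rw [smul_eq_mul, mul_one, ← hG j t]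
    rfl
  have hGle : G t ≤ 1 := by
    rw [← hG 0 t]
    have h1 : μ (s 0) ≤ 1 := prob_le_one
    calc (μ (s 0)).toReal ≤ (1:ℝ≥0∞).toReal := ENNReal.toReal_mono ENNReal.one_ne_top h1
      _ = 1 := by simp
  have hZsq : ∀ j, (Z j) ^ 2 = Z j := by
    intro j; funext ω
    simp only [Pi.pow_apply, hZite]
    split_ifs <;> norm_num
  have hvar : ∀ j, variance (Z j) μ ≤ 1 := by
    intro j
    rw [variance_eq_sub (hZmem j)]
    have : μ[(Z j) ^ 2] = G t := by rw [hZsq j, hZmean j]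
    rw [this, hZmean j]
    nlinarith [sq_nonneg (G t)]
  set S : Ω → ℝ := ∑ j ∈ Finset.range m, Z j with hS
  have hSmem : MemLp S 2 μ := memLp_finset_sum' _ (fun j _ => hZmem j)
  have hSapp : ∀ ω, S ω = ∑ j ∈ Finset.range m, Z j ω := by
    intro ω; rw [hS]; simp
  have hSmean : μ[S] = m * G t := by
    have h1 : μ[S] = ∫ ω, (∑ j ∈ Finset.range m, Z j ω) ∂μ := by
      apply integral_congr_ae
      filter_upwards with ω using hSapp ω
    rw [h1, integral_finset_sum _ (fun j _ => hZint j)]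
    simp [hZmean]
  have hSvar : variance S μ ≤ m := by
    rw [hS]
    rw [IndepFun.variance_sum (fun j _ => hZmem j) ?_]
    · calc (∑ j ∈ Finset.range m, variance (Z j) μ) ≤ ∑ j ∈ Finset.range m, (1:ℝ) :=
          Finset.sum_le_sum (fun j _ => hvar j)
        _ = m := by simp
    · intro i hi j hj hij
      have hind := hpair i j hij
      have hg : Measurable (fun x : ℝ => if x ≤ t then (1:ℝ) else 0) := by
        have : (fun x : ℝ => if x ≤ t then (1:ℝ) else 0)
            = (Set.Iic t).indicator (fun _ => (1:ℝ)) := by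
          funext x; simp [Set.indicator_apply]
        rw [this]
        exact measurable_const.indicator measurableSet_Iic
      have h1 : Z i = (fun x : ℝ => if x ≤ t then (1:ℝ) else 0) ∘ (W i) := by
        funext ω; simp [hZite, Function.comp]
      have h2 : Z j = (fun x : ℝ => if x ≤ t then (1:ℝ) else 0) ∘ (W j) := by
        funext ω; simp [hZite, Function.comp]
      rw [h1, h2]
      exact hind.comp hg hg
  have hcheb := meas_ge_le_variance_div_sq (μ := μ) hSmem (c := m * η) (by positivity)
  have hevent : {ω | η ≤ |Fhat W m ω t - G t|} = {ω | (m:ℝ) * η ≤ |S ω - μ[S]|} := by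
    ext ω
    simp only [Set.mem_setOf_eq]
    rw [hSmean, hSapp]
    have hsum : (∑ j ∈ Finset.range m, Z j ω)
        = ∑ j ∈ Finset.range m, if W j ω ≤ t then (1:ℝ) else 0 :=
      Finset.sum_congr rfl fun j _ => hZite j ω
    have hF : Fhat W m ω t - G t = ((∑ j ∈ Finset.range m, Z j ω) - m * G t) / m := by
      rw [Fhat_eq_sum, hsum]
      field_simp
    rw [hF, abs_div, abs_of_pos hm', le_div_iff₀ hm', mul_comm]
  rw [hevent]
  refine hcheb.trans ?_
  apply ENNReal.ofReal_le_ofReal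
  rw [div_le_div_iff₀ (by positivity) (by positivity)]
  calc variance S μ * (m * η ^ 2) ≤ (m:ℝ) * (m * η ^ 2) :=
      mul_le_mul_of_nonneg_right hSvar (by positivity)
    _ = 1 * (m * η) ^ 2 := by ring

lemma gc {Ω : Type*} [MeasurableSpace Ω] (μ : Measure Ω) [IsProbabilityMeasure μ]
    (W : ℕ → Ω → ℝ) (hmeas : ∀ j, Measurable (W j))
    (hpair : ∀ i j, i ≠ j → IndepFun (W i) (W j) μ)
    (G : ℝ → ℝ) (hG : ∀ j t, (μ {ω | W j ω ≤ t}).toReal = G t)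
    (hGcont : Continuous G) (η : ℝ) (hη : 0 < η) :
    Tendsto (fun m : ℕ => μ {ω | ¬ ∀ t : ℝ, |Fhat W m ω t - G t| < η}) atTop (𝓝 0) := by
  classical
  have hGmono : Monotone G := by
    intro u v huv
    rw [← hG 0 u, ← hG 0 v]
    exact ENNReal.toReal_mono (measure_ne_top μ _)
      (measure_mono fun ω hω => le_trans hω huv)
  have hG0 : ∀ u, 0 ≤ G u := fun u => hG 0 u ▸ ENNReal.toReal_nonneg
  have hG1 : ∀ u, G u ≤ 1 := by
    intro u; rw [← hG 0 u]
    calc (μ _).toReal ≤ (1:ℝ≥0∞).toReal :=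
        ENNReal.toReal_mono ENNReal.one_ne_top prob_le_one
      _ = 1 := by simp
  set η' : ℝ := min (η/3) (1/3) with hη'def
  have hη' : 0 < η' := lt_min (by linarith) (by norm_num)
  have hη'3 : η' ≤ 1/3 := min_le_right _ _
  have hη'η : 2*η' < η := by
    have h1 : η' ≤ η/3 := min_le_left _ _
    linarith
  -- find b with 1 - η' < G b
  have htb : Tendsto (fun n : ℕ => G (n:ℝ)) atTop (𝓝 1) := by
    have hUnion : (⋃ n : ℕ, {ω | W 0 ω ≤ (n:ℝ)}) = Set.univ := by
      ext ω
      simp only [Set.mem_iUnion, Set.mem_setOf_eq, Set.mem_univ, iff_true]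
      exact exists_nat_ge (W 0 ω)
    have h1 : Tendsto (fun n : ℕ => μ {ω | W 0 ω ≤ (n:ℝ)}) atTop (𝓝 1) := by
      have h2 := tendsto_measure_iUnion_atTop (μ := μ)
        (s := fun n : ℕ => {ω | W 0 ω ≤ (n:ℝ)})
        (by
          intro n1 n2 h12 ω hω
          simp only [Set.mem_setOf_eq] at hω ⊢
          exact le_trans hω (Nat.cast_le.mpr h12))
      rw [hUnion, measure_univ] at h2
      exact h2
    have h2 := (ENNReal.tendsto_toReal ENNReal.one_ne_top).comp h1
    simp only [Function.comp_def] at h2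
    simp only [hG 0] at h2
    simpa using h2
  obtain ⟨nb, hnb⟩ := (htb.eventually (eventually_gt_nhds
    (by linarith : 1 - η' < 1))).exists
  set b : ℝ := (nb : ℝ) with hbdef
  -- find a with G a < η' and a < b
  have hta : Tendsto (fun n : ℕ => G (-(n:ℝ))) atTop (𝓝 0) := by
    have hInter : (⋂ n : ℕ, {ω | W 0 ω ≤ -(n:ℝ)}) = ∅ := by
      ext ω
      simp only [Set.mem_iInter, Set.mem_setOf_eq, Set.mem_empty_iff_false,
        iff_false, not_forall]
      obtain ⟨n, hn⟩ := exists_nat_gt (-(W 0 ω))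
      exact ⟨n, by push_neg; linarith⟩
    have h1 : Tendsto (fun n : ℕ => μ {ω | W 0 ω ≤ -(n:ℝ)}) atTop (𝓝 0) := by
      have h2 := tendsto_measure_iInter_atTop (μ := μ)
        (s := fun n : ℕ => {ω | W 0 ω ≤ -(n:ℝ)})
        (fun n => ((hmeas 0) measurableSet_Iic).nullMeasurableSet)
        (by
          intro n1 n2 h12 ω hω
          simp only [Set.mem_setOf_eq] at hω ⊢
          exact le_trans hω (neg_le_neg (Nat.cast_le.mpr h12)))
        ⟨0, measure_ne_top μ _⟩
      rw [hInter, measure_empty] at h2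
      exact h2
    have h2 := (ENNReal.tendsto_toReal ENNReal.zero_ne_top).comp h1
    simp only [Function.comp_def] at h2
    simp only [hG 0] at h2
    simpa using h2
  obtain ⟨na, hna⟩ := (hta.eventually (eventually_lt_nhds hη')).exists
  set a : ℝ := min (-(na:ℝ)) (b - 1) with hadef
  have hGa : G a < η' := lt_of_le_of_lt (hGmono (min_le_left _ _)) hna
  have hab : a < b := lt_of_le_of_lt (min_le_right _ _) (by linarith)
  -- uniform continuity grid
  obtain ⟨δ₀, hδ₀pos, hδ₀⟩ := Metric.uniformContinuousOn_iff.mp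
    ((isCompact_Icc (a := a) (b := b)).uniformContinuousOn_of_continuous
      hGcont.continuousOn) η' hη'
  obtain ⟨k, hk⟩ := exists_nat_gt ((b - a) / δ₀)
  have hkR : (0:ℝ) < k := by
    have h1 : (0:ℝ) < (b-a)/δ₀ := div_pos (by linarith) hδ₀pos
    linarith
  set h : ℝ := (b - a) / k with hdef
  have hhpos : 0 < h := div_pos (by linarith) hkR
  have hhδ : h < δ₀ := by
    rw [hdef, div_lt_iff₀ hkR]
    rw [div_lt_iff₀ hδ₀pos] at hk
    linarith
  set sp : ℕ → ℝ := fun i => a + i * h with hspdef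
  have hsp0 : sp 0 = a := by simp [hspdef]
  have hkh : (k:ℝ) * h = b - a := by
    rw [hdef]; field_simp
  have hspk : sp k = b := by rw [hspdef]; simp only []; rw [hkh]; ring
  have hspmono : Monotone sp := by
    intro i j hij
    simp only [hspdef]
    have : (i:ℝ) ≤ j := by exact_mod_cast hij
    nlinarith
  have hspIcc : ∀ i, i ≤ k → sp i ∈ Set.Icc a b := by
    intro i hik
    constructor
    · have h1 : 0 ≤ (i:ℝ) * h := by positivity
      show a ≤ a + (i:ℝ) * h
      linarith
    · rw [← hspk]; exact hspmono hik
  have hmesh : ∀ i, i < k → G (sp (i+1)) ≤ G (sp i) + η' := by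
    intro i hik
    have h1 : sp (i+1) ∈ Set.Icc a b := hspIcc (i+1) (by omega)
    have h2 : sp i ∈ Set.Icc a b := hspIcc i (by omega)
    have h3 : dist (sp (i+1)) (sp i) < δ₀ := by
      rw [Real.dist_eq]
      have h4 : sp (i+1) - sp i = h := by
        simp only [hspdef]; push_cast; ring
      rw [h4, abs_of_pos hhpos]
      exact hhδ
    have h5 := hδ₀ _ h1 _ h2 h3
    rw [Real.dist_eq, abs_lt] at h5
    linarith [h5.1, h5.2]
  -- deterministic key lemma
  have hkey : ∀ m : ℕ, 1 ≤ m → ∀ ω : Ω,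
      (∀ i ∈ Finset.range (k+1), |Fhat W m ω (sp i) - G (sp i)| < η') →
      ∀ t : ℝ, |Fhat W m ω t - G t| < η := by
    intro m hm ω hdev t
    have hΦmono := Fhat_mono W m ω
    have hΦ0 : ∀ u, 0 ≤ Fhat W m ω u := Fhat_nonneg W m ω
    have hΦ1 : ∀ u, Fhat W m ω u ≤ 1 := Fhat_le_one W hm ω
    rcases lt_or_ge t a with hta' | hta'
    · have h1 : Fhat W m ω t ≤ Fhat W m ω a := hΦmono hta'.le
      have h2 := hdev 0 (Finset.mem_range.mpr (by omega))
      rw [hsp0, abs_lt] at h2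
      have h3 : G t ≤ G a := hGmono hta'.le
      rw [abs_lt]
      constructor <;> linarith [hΦ0 t, hG0 t, h2.1, h2.2]
    rcases le_or_gt t b with htb' | htb'
    · -- a ≤ t ≤ b
      set I := (Finset.range (k+1)).filter (fun i => sp i ≤ t) with hI
      have hI0 : (0:ℕ) ∈ I := by
        rw [hI, Finset.mem_filter]
        exact ⟨Finset.mem_range.mpr (by omega), by rw [hsp0]; exact hta'⟩
      have hIne : I.Nonempty := ⟨0, hI0⟩
      set i₀ := I.max' hIne with hi₀
      have hi₀mem : i₀ ∈ I := I.max'_mem hIne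
      have hi₀k : i₀ ≤ k := by
        have := (Finset.mem_filter.mp hi₀mem).1
        rw [Finset.mem_range] at this; omega
      have hi₀le : sp i₀ ≤ t := (Finset.mem_filter.mp hi₀mem).2
      rcases eq_or_lt_of_le hi₀k with heq | hlt
      · have hteq : t = b := le_antisymm htb' (by rw [← hspk, ← heq]; exact hi₀le)
        have h2 := hdev k (Finset.mem_range.mpr (by omega))
        rw [hspk] at h2
        rw [hteq]
        exact h2.trans_le (by linarith)
      · have hnot : ¬ sp (i₀+1) ≤ t := by
          intro hcon
          have hmem : i₀ + 1 ∈ I := Finset.mem_filter.mpr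
            ⟨Finset.mem_range.mpr (by omega), hcon⟩
          have := Finset.le_max' I _ hmem
          omega
        push_neg at hnot
        have hd0 := hdev i₀ (Finset.mem_range.mpr (by omega))
        have hd1 := hdev (i₀+1) (Finset.mem_range.mpr (by omega))
        have hmesh' := hmesh i₀ hlt
        have hΦa : Fhat W m ω t ≤ Fhat W m ω (sp (i₀+1)) := hΦmono hnot.le
        have hΦb : Fhat W m ω (sp i₀) ≤ Fhat W m ω t := hΦmono hi₀le
        have hGa' : G (sp i₀) ≤ G t := hGmono hi₀le
        have hGb' : G t ≤ G (sp (i₀+1)) := hGmono hnot.le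
        rw [abs_lt] at hd0 hd1 ⊢
        constructor <;> linarith [hd0.1, hd0.2, hd1.1, hd1.2]
    · -- b < t
      have h1 : Fhat W m ω b ≤ Fhat W m ω t := hΦmono htb'.le
      have h2 := hdev k (Finset.mem_range.mpr (by omega))
      rw [hspk, abs_lt] at h2
      have h3 : G b ≤ G t := hGmono htb'.le
      rw [abs_lt]
      constructor <;> linarith [hΦ1 t, hG1 t, h2.1, h2.2]
  -- union bound
  have hbound : ∀ m : ℕ, 1 ≤ m →
      μ {ω | ¬ ∀ t : ℝ, |Fhat W m ω t - G t| < η}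
        ≤ ((k:ℝ≥0∞)+1) * ENNReal.ofReal (1 / (m * η' ^ 2)) := by
    intro m hm
    have hsub : {ω | ¬ ∀ t : ℝ, |Fhat W m ω t - G t| < η}
        ⊆ ⋃ i ∈ Finset.range (k+1), {ω | η' ≤ |Fhat W m ω (sp i) - G (sp i)|} := by
      intro ω hω
      by_contra hcon
      simp only [Set.mem_iUnion, Set.mem_setOf_eq, not_exists, not_le] at hcon
      exact hω (hkey m hm ω (fun i hi => hcon i hi))
    calc μ {ω | ¬ ∀ t : ℝ, |Fhat W m ω t - G t| < η}
        ≤ μ (⋃ i ∈ Finset.range (k+1), {ω | η' ≤ |Fhat W m ω (sp i) - G (sp i)|}) :=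
          measure_mono hsub
      _ ≤ ∑ i ∈ Finset.range (k+1), μ {ω | η' ≤ |Fhat W m ω (sp i) - G (sp i)|} :=
          measure_biUnion_finset_le _ _
      _ ≤ ∑ _i ∈ Finset.range (k+1), ENNReal.ofReal (1 / (m * η' ^ 2)) :=
          Finset.sum_le_sum fun i _ => cheb μ W hmeas hpair G hG (sp i) η' hη' m hm
      _ = ((k:ℝ≥0∞)+1) * ENNReal.ofReal (1 / (m * η' ^ 2)) := by
          rw [Finset.sum_const, Finset.card_range, nsmul_eq_mul]
          push_cast
          ring
  -- limit
  have hzero : Tendsto (fun m : ℕ => ((k:ℝ≥0∞)+1) * ENNReal.ofReal (1 / (m * η' ^ 2)))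
      atTop (𝓝 0) := by
    have h1 : Tendsto (fun m : ℕ => 1 / ((m:ℝ) * η' ^ 2)) atTop (𝓝 0) := by
      have h2 : (fun m : ℕ => 1 / ((m:ℝ) * η' ^ 2))
          = fun m : ℕ => (1/η'^2) * (1/(m:ℝ)) := by
        funext m
        rcases Nat.eq_zero_or_pos m with rfl | hm
        · simp
        · have : ((m:ℝ)) ≠ 0 := by positivity
          field_simp
      rw [h2]
      have h5 := tendsto_one_div_atTop_nhds_zero_nat.const_mul (1/η'^2)
      rw [mul_zero] at h5
      exact h5
    have h3 : Tendsto (fun m : ℕ => ENNReal.ofReal (1 / ((m:ℝ) * η' ^ 2))) atTop (𝓝 0) := by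
      have h4 := (ENNReal.continuous_ofReal.tendsto 0).comp h1
      simpa [Function.comp_def] using h4
    have h5 := ENNReal.Tendsto.const_mul h3 (Or.inr (by simp : ((k:ℝ≥0∞)+1) ≠ ⊤))
    simpa using h5
  apply tendsto_of_tendsto_of_tendsto_of_le_of_le' tendsto_const_nhds hzero
  · filter_upwards with m using zero_le
  · filter_upwards [eventually_ge_atTop 1] with m hm using hbound m hm


end Stmt14Aux
/-- The empirical risk `ℓ(t) = F̂₀_m(t) - λ F̂_n(t)` built from the first `m` negative
control samples `X` and the first `n` investigated samples `Y`. -/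
noncomputable def empRisk {Ω : Type*} (X Y : ℕ → Ω → ℝ) (lam : ℝ) (m n : ℕ)
    (ω : Ω) (t : ℝ) : ℝ :=
  (({j : ℕ | j < m ∧ X j ω ≤ t} : Set ℕ).ncard : ℝ) / m -
    lam * ((({i : ℕ | i < n ∧ Y i ω ≤ t} : Set ℕ).ncard : ℝ) / n)

/-- under the stated density/regularity/separation assumptions, the
empirical minimizer `τ̂ = argmin (F̂₀_m - λF̂_n)` converges in probability to
`τ* = argmin (F₀ - λF)` as `n, m → ∞`. -/
theorem stmt14 {Ω : Type*} [MeasurableSpace Ω] (μ : Measure Ω) [IsProbabilityMeasure μ]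
    (F F₀ f f₀ : ℝ → ℝ) (lam : ℝ) (hlam : 0 < lam)
    -- densities:
    (hF : ∀ t : ℝ, HasDerivAt F (f t) t)
    (hF₀ : ∀ t : ℝ, HasDerivAt F₀ (f₀ t) t)
    -- infinite i.i.d. samples: X from F₀ and Y from F, all mutually independent
    (X Y : ℕ → Ω → ℝ)
    (hXmeas : ∀ j, Measurable (X j)) (hYmeas : ∀ i, Measurable (Y i))
    (hindep : iIndepFun
      (Sum.elim X Y) μ)
    (hX : ∀ j : ℕ, ∀ t : ℝ, (μ {ω | X j ω ≤ t}).toReal = F₀ t)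
    (hY : ∀ i : ℕ, ∀ t : ℝ, (μ {ω | Y i ω ≤ t}).toReal = F t)
    -- population minimizer τ*:
    (τstar : ℝ)
    (hmin : ∀ t : ℝ, F₀ τstar - lam * F τstar ≤ F₀ t - lam * F t)
    -- assumption 1: positive differentiable densities at τ*
    (hfpos : 0 < f τstar) (hf₀pos : 0 < f₀ τstar)
    (f' f₀' : ℝ)
    (hf' : HasDerivAt f f' τstar) (hf₀' : HasDerivAt f₀ f₀' τstar)
    -- assumption 2: bounded densities near τ*
    (fmax f₀max D : ℝ) (hD : 0 < D)
    (hfbd : ∀ t : ℝ, |t - τstar| ≤ D → f t ≤ fmax)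
    (hf₀bd : ∀ t : ℝ, |t - τstar| ≤ D → f₀ t ≤ f₀max)
    -- assumption 3: monotone likelihood ratio at τ*
    (r : ℝ) (hr : HasDerivAt (fun t => f₀ t / f t) r τstar) (hrpos : 0 < r)
    -- assumption 4: well-separated minimum
    (hsep : ∀ δ : ℝ, 0 < δ → ∃ ε : ℝ, 0 < ε ∧ ∀ t : ℝ, δ < |t - τstar| →
      F₀ τstar - lam * F τstar + ε < F₀ t - lam * F t)
    -- empirical risk minimizers:
    (τhat : ℕ → ℕ → Ω → ℝ)
    (hhat : ∀ n m : ℕ, ∀ ω : Ω, ∀ t : ℝ,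
      empRisk X Y lam m n ω (τhat n m ω) ≤ empRisk X Y lam m n ω t) :
    ∀ δ : ℝ, 0 < δ →
      Tendsto (fun p : ℕ × ℕ => μ {ω | δ < |τhat p.1 p.2 ω - τstar|})
        atTop (𝓝 0) := by
  intro δ hδ
  obtain ⟨ε, hε, hsep'⟩ := hsep δ hδ
  have hpairX : ∀ i j : ℕ, i ≠ j → IndepFun (X i) (X j) μ := by
    intro i j hij
    have h1 := hindep.indepFun (show (Sum.inl i : ℕ ⊕ ℕ) ≠ Sum.inl j by simpa using hij)
    simpa using h1
  have hpairY : ∀ i j : ℕ, i ≠ j → IndepFun (Y i) (Y j) μ := by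
    intro i j hij
    have h1 := hindep.indepFun (show (Sum.inr i : ℕ ⊕ ℕ) ≠ Sum.inr j by simpa using hij)
    simpa using h1
  have hF₀cont : Continuous F₀ := continuous_iff_continuousAt.mpr fun t => (hF₀ t).continuousAt
  have hFcont : Continuous F := continuous_iff_continuousAt.mpr fun t => (hF t).continuousAt
  have hεX : 0 < ε/4 := by linarith
  have hεY : 0 < ε/(4*lam) := by positivity
  have hA := Stmt14Aux.gc μ X hXmeas hpairX F₀ hX hF₀cont (ε/4) hεX
  have hB := Stmt14Aux.gc μ Y hYmeas hpairY F hY hFcont (ε/(4*lam)) hεY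
  have hincl : ∀ n m : ℕ, {ω | δ < |τhat n m ω - τstar|}
      ⊆ {ω | ¬ ∀ t : ℝ, |Stmt14Aux.Fhat X m ω t - F₀ t| < ε/4}
        ∪ {ω | ¬ ∀ t : ℝ, |Stmt14Aux.Fhat Y n ω t - F t| < ε/(4*lam)} := by
    intro n m ω hω
    simp only [Set.mem_setOf_eq] at hω
    by_contra hc
    simp only [Set.mem_union, Set.mem_setOf_eq, not_or, not_not] at hc
    obtain ⟨h0, h1⟩ := hc
    have hchain := hhat n m ω τstar
    have hsepc := hsep' (τhat n m ω) hω
    set τh := τhat n m ω with hτh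
    have e1 : empRisk X Y lam m n ω τh
        = Stmt14Aux.Fhat X m ω τh - lam * Stmt14Aux.Fhat Y n ω τh := rfl
    have e2 : empRisk X Y lam m n ω τstar
        = Stmt14Aux.Fhat X m ω τstar - lam * Stmt14Aux.Fhat Y n ω τstar := rfl
    have d0h := abs_lt.mp (h0 τh)
    have d0s := abs_lt.mp (h0 τstar)
    have d1h := abs_lt.mp (h1 τh)
    have d1s := abs_lt.mp (h1 τstar)
    have l3 : lam * (ε/(4*lam)) = ε/4 := by field_simp
    have l1 : lam * Stmt14Aux.Fhat Y n ω τh - lam * F τh < ε/4 := by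
      have := mul_lt_mul_of_pos_left d1h.2 hlam
      rw [mul_sub, l3] at this
      exact this
    have l2 : lam * F τstar - lam * Stmt14Aux.Fhat Y n ω τstar < ε/4 := by
      have h2 : F τstar - Stmt14Aux.Fhat Y n ω τstar < ε/(4*lam) := by linarith [d1s.1]
      have := mul_lt_mul_of_pos_left h2 hlam
      rw [mul_sub, l3] at this
      exact this
    rw [e1, e2] at hchain
    linarith [d0h.1, d0s.2]
  have hmain : ∀ p : ℕ × ℕ, μ {ω | δ < |τhat p.1 p.2 ω - τstar|}
      ≤ μ {ω | ¬ ∀ t : ℝ, |Stmt14Aux.Fhat X p.2 ω t - F₀ t| < ε/4}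
        + μ {ω | ¬ ∀ t : ℝ, |Stmt14Aux.Fhat Y p.1 ω t - F t| < ε/(4*lam)} :=
    fun p => (measure_mono (hincl p.1 p.2)).trans (measure_union_le _ _)
  have hAc : Tendsto (fun p : ℕ × ℕ =>
      μ {ω | ¬ ∀ t : ℝ, |Stmt14Aux.Fhat X p.2 ω t - F₀ t| < ε/4}) atTop (𝓝 0) := by
    rw [← prod_atTop_atTop_eq]
    exact hA.comp tendsto_snd
  have hBc : Tendsto (fun p : ℕ × ℕ =>
      μ {ω | ¬ ∀ t : ℝ, |Stmt14Aux.Fhat Y p.1 ω t - F t| < ε/(4*lam)}) atTop (𝓝 0) := by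
    rw [← prod_atTop_atTop_eq]
    exact hB.comp tendsto_fst
  have hsum : Tendsto (fun p : ℕ × ℕ =>
      μ {ω | ¬ ∀ t : ℝ, |Stmt14Aux.Fhat X p.2 ω t - F₀ t| < ε/4}
        + μ {ω | ¬ ∀ t : ℝ, |Stmt14Aux.Fhat Y p.1 ω t - F t| < ε/(4*lam)})
      atTop (𝓝 0) := by
    simpa using hAc.add hBc
  exact tendsto_of_tendsto_of_tendsto_of_le_of_le tendsto_const_nhds hsum
    (fun p => zero_le) hmain
end
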